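/- arXiv:1107.1130 — 4 statements merged into one kernel-verified Lean document; each statement's English description precedes it below -/
import Mathlib

section
/- For every base b ≥ 2 and every k ≥ 1, the number of base-b dismal divisors of the repunit (b^k − 1)/(b − 1) equals Σ_{t=1}^{k} T(k,t)·(b−1)^t, where T(k,t) is the number of compositions of k into exactly t parts in which no part exceeds the first part. -/
/-- The `i`-th base-`b` digit of `n`. -/
def digit (b n i : ℕ) : ℕ := n / b ^ i % b

/-- Dismal addition in base `b`: digitwise maximum of base-`b` digits. -/
def dadd (b m n : ℕ) : ℕ :=
  ∑ i ∈ Finset.range (m + n + 1), max (digit b m i) (digit b n i) * b ^ i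

/-- Dismal multiplication in base `b`: digit convolution with `min` as digit
product and `max` as digit sum (no carries). -/
def dmul (b m n : ℕ) : ℕ :=
  ∑ k ∈ Finset.range (m + n + 1),
    ((Finset.range (k + 1)).sup fun i => min (digit b m i) (digit b n (k - i))) * b ^ k

/-- The number of base-`b` digits of `n`. -/
def dlen (b n : ℕ) : ℕ := (Nat.digits b n).length

/-- `p` dismally divides `n` in base `b`. -/
def DDvd (b p n : ℕ) : Prop := ∃ q, dmul b p q = n

open scoped Classical in
/-- The finite set of dismal divisors of `n` (every dismal divisor of a
nonzero `n` has at most `dlen b n` digits). -/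
noncomputable def ddivisors (b n : ℕ) : Finset ℕ :=
  (Finset.range (b ^ dlen b n)).filter fun p => DDvd b p n

/-- The dismal sum of a finite set of numbers: digitwise supremum. -/
def ddigitSum (b : ℕ) (S : Finset ℕ) : ℕ :=
  ∑ i ∈ Finset.range (S.sup id + 1), (S.sup fun p => digit b p i) * b ^ i

/-- The number of dismal divisors of `n` in base `b`. -/
noncomputable def dnum (b n : ℕ) : ℕ := (ddivisors b n).card

/-- `T k t`: the number of compositions of `k` into exactly `t` parts in which
no part exceeds the first part. -/
noncomputable def T (k t : ℕ) : ℕ :=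
  Nat.card {l : List ℕ // l.length = t ∧ l.sum = k ∧ (∀ x ∈ l, 0 < x) ∧ ∀ x ∈ l, x ≤ l.headI}

namespace DP
open Finset

variable {b k : ℕ}

lemma digit_lt (hb : 0 < b) (n i : ℕ) : digit b n i < b := Nat.mod_lt _ hb

lemma digit_zero (i : ℕ) : digit b 0 i = 0 := by simp [digit]

lemma digit_succ (n i : ℕ) : digit b n (i+1) = digit b (n/b) i := by
  simp [digit, Nat.div_div_eq_div_mul, pow_succ']

lemma digit_eq_getD (hb : 1 < b) (n i : ℕ) : digit b n i = (Nat.digits b n).getD i 0 := by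
  induction n using Nat.strong_induction_on generalizing i with
  | _ n ih =>
    rcases Nat.eq_zero_or_pos n with h | h
    · simp [h, digit_zero]
    · rw [Nat.digits_def' hb h]
      cases i with
      | zero => simp [digit]
      | succ i =>
        rw [digit_succ, List.getD_cons_succ]
        exact ih _ (Nat.div_lt_self h hb) i

lemma digit_of_dlen_le (hb : 1 < b) {n i : ℕ} (h : dlen b n ≤ i) : digit b n i = 0 := by
  rw [digit_eq_getD hb]; exact List.getD_eq_default _ _ h

lemma lt_dlen_of_digit_ne_zero (hb : 1 < b) {n i : ℕ} (h : digit b n i ≠ 0) : i < dlen b n := by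
  by_contra h'; exact h (digit_of_dlen_le hb (not_lt.1 h'))

lemma digit_top_ne_zero (hb : 1 < b) {n : ℕ} (hn : n ≠ 0) : digit b n (dlen b n - 1) ≠ 0 := by
  rw [digit_eq_getD hb]
  have hne : Nat.digits b n ≠ [] := Nat.digits_ne_nil_iff_ne_zero.2 hn
  have hlen : 0 < (Nat.digits b n).length := List.length_pos_iff.2 hne
  rw [List.getD_eq_getElem _ _ (by simp only [dlen]; omega : dlen b n - 1 < (Nat.digits b n).length)]
  have h2 := Nat.getLast_digit_ne_zero b hn
  rw [List.getLast_eq_getElem hne] at h2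
  simpa only [dlen] using h2

lemma lt_pow_dlen (hb : 1 < b) (n : ℕ) : n < b ^ dlen b n := Nat.lt_base_pow_length_digits hb

lemma dlen_le_of_lt (hb : 1 < b) {n m : ℕ} (h : n < b ^ m) : dlen b n ≤ m := by
  by_contra h'
  push_neg at h'
  have hn : n ≠ 0 := by rintro rfl; simp [dlen] at h'
  have h2 := Nat.base_pow_length_digits_le b n hb hn
  have h3 : b ^ (m+1) ≤ b ^ dlen b n := Nat.pow_le_pow_right (by omega) (by omega)
  rw [pow_succ'] at h3
  have h4 := le_trans h3 h2
  have h5 : b ^ m ≤ n := Nat.le_of_mul_le_mul_left h4 (by omega)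
  omega

lemma dlen_pos (hb : 1 < b) {n : ℕ} (hn : n ≠ 0) : 0 < dlen b n := by
  simp [dlen, Nat.digits_ne_nil_iff_ne_zero.2 hn, List.length_pos_iff]

lemma dlen_le_self (hb : 1 < b) {p : ℕ} (hp : p ≠ 0) : dlen b p ≤ p := by
  have h2 := Nat.base_pow_length_digits_le b p hb hp
  have h1 : 0 < dlen b p := dlen_pos hb hp
  have h3 : b ^ ((Nat.digits b p).length) = b * b ^ (dlen b p - 1) := by
    rw [← pow_succ']; congr 1; simp only [dlen] at h1 ⊢; omega
  rw [h3] at h2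
  have h4 : b ^ (dlen b p - 1) ≤ p := Nat.le_of_mul_le_mul_left h2 (by omega)
  have h5 : dlen b p - 1 < 2 ^ (dlen b p - 1) := Nat.lt_two_pow_self
  have h6 : 2 ^ (dlen b p - 1) ≤ b ^ (dlen b p - 1) := Nat.pow_le_pow_left (by omega) _
  omega

lemma sum_le_pow (c : ℕ → ℕ) (hc : ∀ i, c i < b) (N : ℕ) :
    ∑ i ∈ range N, c i * b ^ i ≤ b ^ N - 1 := by
  induction N with
  | zero => simp
  | succ N ih =>
    rw [Finset.sum_range_succ]
    have h1 : c N ≤ b - 1 := by have := hc N; omega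
    have h2 : c N * b ^ N ≤ (b-1) * b^N := Nat.mul_le_mul_right _ h1
    have hp : 0 < b ^ N := Nat.pow_pos (by have := hc 0; omega)
    have e : (b-1) * b^N = b^(N+1) - b^N := by
      rw [pow_succ', Nat.sub_mul, one_mul]
    have hle : b ^ N ≤ b ^ (N+1) := Nat.pow_le_pow_right (by have := hc 0; omega) (by omega)
    omega

lemma sum_lt_pow (c : ℕ → ℕ) (hc : ∀ i, c i < b) (N : ℕ) :
    ∑ i ∈ range N, c i * b ^ i < b ^ N := by
  have h := sum_le_pow c hc N
  have : 0 < b ^ N := Nat.pow_pos (by have := hc 0; omega)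
  omega

lemma digit_sum (hb : 1 < b) (c : ℕ → ℕ) (hc : ∀ i, c i < b) (N j : ℕ) :
    digit b (∑ i ∈ range N, c i * b ^ i) j = if j < N then c j else 0 := by
  split_ifs with hj
  · have hsplit : ∑ i ∈ range N, c i * b ^ i
        = (∑ i ∈ range j, c i * b ^ i) + b ^ j * (∑ i ∈ range (N - j), c (j+i) * b ^ i) := by
      have h1 : (∑ i ∈ Finset.Ico 0 j, c i * b ^ i) + ∑ i ∈ Finset.Ico j N, c i * b ^ i
          = ∑ i ∈ Finset.Ico 0 N, c i * b ^ i :=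
        Finset.sum_Ico_consecutive _ (Nat.zero_le j) (le_of_lt hj)
      have h2 : ∑ i ∈ Finset.Ico j N, c i * b ^ i
          = b ^ j * ∑ i ∈ range (N - j), c (j+i) * b ^ i := by
        rw [Finset.sum_Ico_eq_sum_range, Finset.mul_sum]
        apply Finset.sum_congr rfl
        intro i _
        rw [pow_add]; ring
      rw [← Finset.range_eq_Ico, ← Finset.range_eq_Ico] at h1
      rw [← h1, h2]
    have hlow : (∑ i ∈ range j, c i * b ^ i) < b ^ j := sum_lt_pow c hc j
    have hdiv : (∑ i ∈ range N, c i * b ^ i) / b ^ j = ∑ i ∈ range (N - j), c (j+i) * b ^ i := by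
      rw [hsplit, Nat.add_mul_div_left _ _ (Nat.pow_pos (by omega)),
        Nat.div_eq_of_lt hlow, zero_add]
    have hNj : N - j = (N - j - 1) + 1 := by omega
    have hpeel : ∑ i ∈ range (N - j), c (j+i) * b ^ i
        = c j + b * ∑ i ∈ range (N - j - 1), c (j+i+1) * b ^ i := by
      rw [hNj, Finset.sum_range_succ']
      simp only [pow_succ']
      rw [Finset.mul_sum]
      rw [add_comm]
      congr 1
      · simp
      · apply Finset.sum_congr rfl; intro i _; ring_nf
    unfold digit
    rw [hdiv, hpeel, Nat.add_mul_mod_self_left, Nat.mod_eq_of_lt (hc j)]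
  · have h1 : (∑ i ∈ range N, c i * b ^ i) < b ^ j :=
      lt_of_lt_of_le (sum_lt_pow c hc N) (Nat.pow_le_pow_right (by omega) (by omega))
    unfold digit
    rw [Nat.div_eq_of_lt h1]
    simp

lemma eq_sum_digit (hb : 1 < b) : ∀ (N n : ℕ), n < b ^ N → n = ∑ i ∈ range N, digit b n i * b ^ i := by
  intro N
  induction N with
  | zero => intro n hn; simp only [pow_zero, Nat.lt_one_iff] at hn; simp [hn]
  | succ N ih =>
    intro n hn
    rw [Finset.sum_range_succ']
    have h1 : ∀ i, digit b n (i+1) = digit b (n/b) i := fun i => digit_succ n i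
    have h2 : n / b < b ^ N := by
      rw [pow_succ'] at hn
      exact Nat.div_lt_of_lt_mul hn
    calc n = n % b + b * (n / b) := by rw [Nat.mod_add_div]
    _ = ∑ i ∈ range N, digit b n (i+1) * b ^ (i+1) + digit b n 0 * b ^ 0 := by
        simp only [h1, pow_succ']
        have h3 : ∑ x ∈ range N, digit b (n/b) x * (b * b ^ x)
            = b * ∑ x ∈ range N, digit b (n/b) x * b ^ x := by
          rw [Finset.mul_sum]
          apply Finset.sum_congr rfl
          intro i _
          ring
        rw [h3, ← ih (n/b) h2]
        simp [digit, add_comm]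

/-! ### Repunits -/

def rep (b j : ℕ) : ℕ := ∑ i ∈ range j, b ^ i

lemma rep_eq (hb : 2 ≤ b) (j : ℕ) : (b ^ j - 1) / (b - 1) = rep b j := by
  have h : (b - 1) * rep b j = b ^ j - 1 := by
    induction j with
    | zero => simp [rep]
    | succ j ih =>
      have hx : 1 ≤ b ^ j := Nat.one_le_pow _ _ (by omega)
      have hbx : b ^ (j+1) = b * b ^ j := pow_succ' b j
      have e : (b-1) * b ^ j = b * b ^ j - b ^ j := by
        rw [Nat.sub_mul, one_mul]
      have hle : b ^ j ≤ b * b ^ j := Nat.le_mul_of_pos_left _ (by omega)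
      rw [rep] at ih ⊢
      rw [Finset.sum_range_succ, Nat.mul_add, ih]
      omega
  rw [← h, Nat.mul_div_cancel_left _ (by omega : 0 < b - 1)]

lemma digit_rep (hb : 2 ≤ b) (j i : ℕ) : digit b (rep b j) i = if i < j then 1 else 0 := by
  have h := digit_sum (b := b) (by omega) (fun _ => 1) (fun _ => by show (1:ℕ) < b; omega) j i
  simpa [rep] using h

lemma rep_lt_pow (hb : 2 ≤ b) (j : ℕ) : rep b j < b ^ j := by
  have h := sum_lt_pow (b := b) (fun _ => 1) (fun _ => by show (1:ℕ) < b; omega) j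
  simpa [rep] using h

lemma dlen_rep (hb : 2 ≤ b) {j : ℕ} (hj : 1 ≤ j) : dlen b (rep b j) = j := by
  have h1 : dlen b (rep b j) ≤ j := dlen_le_of_lt (by omega) (rep_lt_pow hb j)
  have h2 : j - 1 < dlen b (rep b j) := by
    apply lt_dlen_of_digit_ne_zero (by omega)
    rw [digit_rep hb]
    simp only [show j - 1 < j by omega, if_true]
    omega
  omega

lemma self_le_rep (hb : 2 ≤ b) (j : ℕ) : j ≤ rep b j := by
  calc j = ∑ _i ∈ range j, 1 := by simp
  _ ≤ rep b j := Finset.sum_le_sum (fun i _ => Nat.one_le_pow _ _ (by omega))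

/-! ### Dismal convolution -/

def conv (b p q j : ℕ) : ℕ :=
  (range (j+1)).sup fun i => min (digit b p i) (digit b q (j - i))

lemma conv_def (b p q j : ℕ) :
    conv b p q j = (range (j+1)).sup fun i => min (digit b p i) (digit b q (j - i)) := rfl

lemma conv_lt (hb : 1 < b) (p q j : ℕ) : conv b p q j < b := by
  have h : conv b p q j ≤ b - 1 := by
    apply Finset.sup_le
    intro i _
    have := digit_lt (b := b) (by omega) p i
    have := min_le_left (digit b p i) (digit b q (j - i))
    omega
  omega

lemma pow_le_of_digit_ne_zero {n i : ℕ} (h : digit b n i ≠ 0) : b ^ i ≤ n := by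
  have h1 : n / b ^ i ≠ 0 := fun hc => h (by simp [digit, hc])
  have h2 : 1 ≤ n / b ^ i := Nat.one_le_iff_ne_zero.2 h1
  by_contra hc
  push_neg at hc
  rw [Nat.div_eq_of_lt hc] at h2
  omega

lemma le_of_digit_ne_zero (hb : 1 < b) {n i : ℕ} (h : digit b n i ≠ 0) : i ≤ n := by
  have h1 := pow_le_of_digit_ne_zero h
  have h2 : i < 2 ^ i := Nat.lt_two_pow_self
  have h3 : 2 ^ i ≤ b ^ i := Nat.pow_le_pow_left (by omega) i
  omega

lemma conv_eq_zero (hb : 1 < b) {p q j : ℕ} (h : p + q < j) : conv b p q j = 0 := by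
  apply Nat.eq_zero_of_le_zero
  apply Finset.sup_le
  intro i hi
  rw [Finset.mem_range] at hi
  rcases eq_or_ne (digit b p i) 0 with h1 | h1
  · simp [h1]
  rcases eq_or_ne (digit b q (j - i)) 0 with h2 | h2
  · simp [h2]
  exfalso
  have := le_of_digit_ne_zero hb h1
  have := le_of_digit_ne_zero hb h2
  omega

lemma digit_dmul (hb : 1 < b) (p q j : ℕ) : digit b (dmul b p q) j = conv b p q j := by
  have hd : dmul b p q = ∑ j ∈ range (p + q + 1), conv b p q j * b ^ j := rfl
  rw [hd, digit_sum hb _ (fun _ => conv_lt hb p q _)]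
  split_ifs with h
  · rfl
  · exact (conv_eq_zero hb (by omega)).symm

/-! ### Characterization of dismal divisors of the repunit -/

def Good (b k p : ℕ) : Prop :=
  digit b p 0 ≠ 0 ∧ dlen b p ≤ k ∧
    ∀ j < k, ∃ i ≤ j, digit b p i ≠ 0 ∧ j ≤ i + (k - dlen b p)

theorem ddvd_rep_iff (hb : 2 ≤ b) (hk : 1 ≤ k) (p : ℕ) :
    DDvd b p (rep b k) ↔ Good b k p := by
  have hb1 : (1 : ℕ) < b := by omega
  constructor
  · rintro ⟨q, hq⟩
    have hconv : ∀ j, conv b p q j = if j < k then 1 else 0 := by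
      intro j; rw [← digit_dmul hb1, hq, digit_rep hb]
    have h0 : min (digit b p 0) (digit b q 0) = 1 := by
      have h := hconv 0
      rw [if_pos (by omega)] at h
      rw [conv] at h
      simpa using h
    have hp0 : digit b p 0 ≠ 0 := by
      have := min_le_left (digit b p 0) (digit b q 0)
      have := min_le_right (digit b p 0) (digit b q 0)
      rcases Nat.eq_zero_or_pos (digit b p 0) with hz | hz
      · rw [hz] at h0; simp at h0
      · omega
    have hq0 : digit b q 0 ≠ 0 := by
      rcases Nat.eq_zero_or_pos (digit b q 0) with hz | hz
      · rw [hz] at h0; simp at h0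
      · omega
    have hp : p ≠ 0 := fun h => hp0 (by simp [h, digit_zero])
    have hqn : q ≠ 0 := fun h => hq0 (by simp [h, digit_zero])
    have hm1 : 1 ≤ dlen b p := dlen_pos hb1 hp
    have hr1 : 1 ≤ dlen b q := dlen_pos hb1 hqn
    set m := dlen b p with hmdef
    set r := dlen b q with hrdef
    have hup : m - 1 + (r - 1) < k := by
      by_contra hcon
      push_neg at hcon
      have h1 := hconv (m - 1 + (r - 1))
      rw [if_neg (by omega)] at h1
      have h2 : min (digit b p (m-1)) (digit b q (r-1))
          ≤ conv b p q (m - 1 + (r - 1)) := by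
        have hmem : m - 1 ∈ range (m - 1 + (r - 1) + 1) := by
          rw [Finset.mem_range]; omega
        have := Finset.le_sup (f := fun i => min (digit b p i) (digit b q (m - 1 + (r - 1) - i))) hmem
        simpa [conv, show m - 1 + (r - 1) - (m - 1) = r - 1 by omega] using this
      have hptop := digit_top_ne_zero hb1 hp
      have hqtop := digit_top_ne_zero hb1 hqn
      rw [h1] at h2
      rcases Nat.eq_zero_or_pos (digit b p (m-1)) with hz | hz
      · exact hptop hz
      rcases Nat.eq_zero_or_pos (digit b q (r-1)) with hz2 | hz2
      · exact hqtop hz2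
      omega
    have hattain : ∀ j < k, ∃ i ≤ j, digit b p i ≠ 0 ∧ digit b q (j - i) ≠ 0 := by
      intro j hj
      have h1 : conv b p q j = 1 := by rw [hconv, if_pos hj]
      have h2 : 0 < (range (j+1)).sup fun i => min (digit b p i) (digit b q (j - i)) := by
        rw [← conv, h1]; omega
      rw [Finset.lt_sup_iff] at h2
      obtain ⟨i, hi, hmin⟩ := h2
      rw [Finset.mem_range] at hi
      rw [lt_min_iff] at hmin
      exact ⟨i, by omega, by omega, by omega⟩
    have hlow : k - 1 ≤ (m - 1) + (r - 1) := by
      obtain ⟨i, hi, hdi, hdq⟩ := hattain (k-1) (by omega)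
      have := lt_dlen_of_digit_ne_zero hb1 hdi
      have := lt_dlen_of_digit_ne_zero hb1 hdq
      omega
    refine ⟨hp0, by omega, ?_⟩
    intro j hj
    obtain ⟨i, hi, hdi, hdq⟩ := hattain j hj
    have h3 := lt_dlen_of_digit_ne_zero hb1 hdq
    exact ⟨i, hi, hdi, by omega⟩
  · rintro ⟨hp0, hmk, hwin⟩
    have hp : p ≠ 0 := fun h => hp0 (by simp [h, digit_zero])
    have hm1 : 1 ≤ dlen b p := dlen_pos hb1 hp
    refine ⟨rep b (k + 1 - dlen b p), ?_⟩
    have hcv : ∀ j, conv b p (rep b (k + 1 - dlen b p)) j = if j < k then 1 else 0 := by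
      intro j
      split_ifs with hj
      · apply le_antisymm
        · apply Finset.sup_le
          intro i hmem
          have h1 : digit b (rep b (k + 1 - dlen b p)) (j - i) ≤ 1 := by
            rw [digit_rep hb]; split_ifs <;> omega
          have h2 := min_le_right (digit b p i) (digit b (rep b (k + 1 - dlen b p)) (j - i))
          omega
        · obtain ⟨i, hij, hdi, hbound⟩ := hwin j hj
          have hji : j - i < k + 1 - dlen b p := by omega
          have h2 : 1 ≤ min (digit b p i) (digit b (rep b (k + 1 - dlen b p)) (j - i)) := by
            rw [digit_rep hb, if_pos hji]
            have : 1 ≤ digit b p i := by omega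
            omega
          refine le_trans h2 ?_
          rw [conv_def]
          exact Finset.le_sup (f := fun i' => min (digit b p i') (digit b (rep b (k + 1 - dlen b p)) (j - i')))
            (Finset.mem_range.2 (show i < j + 1 by omega))
      · apply Nat.eq_zero_of_le_zero
        apply Finset.sup_le
        intro i hi
        rcases eq_or_ne (digit b p i) 0 with h1 | h1
        · simp [h1]
        have h2 : i < dlen b p := lt_dlen_of_digit_ne_zero hb1 h1
        have h3 : digit b (rep b (k + 1 - dlen b p)) (j - i) = 0 := by
          rw [digit_rep hb, if_neg (by omega)]
        simp [h3]
    show dmul b p (rep b (k + 1 - dlen b p)) = rep b k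
    have hds : dmul b p (rep b (k + 1 - dlen b p)) = ∑ j ∈ range (p + rep b (k + 1 - dlen b p) + 1), conv b p (rep b (k + 1 - dlen b p)) j * b ^ j := rfl
    have hpm : dlen b p ≤ p := dlen_le_self hb1 hp
    have hsr : k + 1 - dlen b p ≤ rep b (k + 1 - dlen b p) := self_le_rep hb _
    have hk' : k ≤ p + rep b (k + 1 - dlen b p) + 1 := by omega
    rw [hds]
    have hcong : ∑ j ∈ range (p + rep b (k + 1 - dlen b p) + 1), conv b p (rep b (k + 1 - dlen b p)) j * b ^ j
        = ∑ j ∈ range (p + rep b (k + 1 - dlen b p) + 1), (if j < k then 1 else 0) * b ^ j :=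
      Finset.sum_congr rfl (fun j _ => by rw [hcv j])
    rw [hcong]
    rw [show rep b k = ∑ i ∈ range k, b ^ i from rfl]
    rw [← Finset.sum_subset (Finset.range_subset_range.2 hk')
      (fun x _ hx => by rw [Finset.mem_range, not_lt] at hx; rw [if_neg (by omega), zero_mul])]
    apply Finset.sum_congr rfl
    intro i hi
    rw [Finset.mem_range] at hi
    rw [if_pos hi, one_mul]

/-! ### Supports -/

def supp (b k p : ℕ) : Finset ℕ := (range k).filter fun i => digit b p i ≠ 0

lemma mem_supp {p i : ℕ} : i ∈ supp b k p ↔ i < k ∧ digit b p i ≠ 0 := by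
  simp [supp]

def ValidS (k : ℕ) (S : Finset ℕ) : Prop :=
  0 ∈ S ∧ ∀ j < k, ∃ i ∈ S, i ≤ j ∧ j ≤ i + (k - (S.sup id + 1))

open scoped Classical in
noncomputable def Valids (k : ℕ) : Finset (Finset ℕ) :=
  ((range k).powerset).filter (ValidS k)

lemma sup_id_mem {S : Finset ℕ} (h : S.Nonempty) : S.sup id ∈ S := by
  have he : S.sup id = S.max' h := by
    apply le_antisymm
    · exact Finset.sup_le fun x hx => S.le_max' x hx
    · exact Finset.le_sup (f := id) (S.max'_mem h)
  rw [he]; exact S.max'_mem h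

lemma mem_ddiv (hb : 2 ≤ b) (hk : 1 ≤ k) {p : ℕ} :
    p ∈ ddivisors b (rep b k) ↔ Good b k p := by
  classical
  unfold ddivisors
  rw [Finset.mem_filter, Finset.mem_range, dlen_rep hb hk, ddvd_rep_iff hb hk]
  constructor
  · rintro ⟨_, h⟩; exact h
  · intro h
    refine ⟨?_, h⟩
    calc p < b ^ dlen b p := lt_pow_dlen (by omega) p
    _ ≤ b ^ k := Nat.pow_le_pow_right (by omega) h.2.1

lemma supp_sup (hb : 2 ≤ b) (hk : 1 ≤ k) {p : ℕ} (h : Good b k p) :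
    (supp b k p).sup id = dlen b p - 1 := by
  obtain ⟨hp0, hmk, _⟩ := h
  have hb1 : (1:ℕ) < b := by omega
  have hp : p ≠ 0 := fun hc => hp0 (by simp [hc, digit_zero])
  have hm1 : 1 ≤ dlen b p := dlen_pos hb1 hp
  apply le_antisymm
  · apply Finset.sup_le
    intro i hi
    rw [mem_supp] at hi
    have := lt_dlen_of_digit_ne_zero hb1 hi.2
    simp only [id]
    omega
  · apply Finset.le_sup (f := id)
    rw [mem_supp]
    exact ⟨by omega, digit_top_ne_zero hb1 hp⟩

lemma good_supp_valid (hb : 2 ≤ b) (hk : 1 ≤ k) {p : ℕ} (h : Good b k p) :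
    supp b k p ∈ Valids k := by
  have hb1 : (1:ℕ) < b := by omega
  obtain ⟨hp0, hmk, hwin⟩ := h
  have hp : p ≠ 0 := fun hc => hp0 (by simp [hc, digit_zero])
  have hm1 : 1 ≤ dlen b p := dlen_pos hb1 hp
  classical
  rw [Valids, Finset.mem_filter, Finset.mem_powerset]
  refine ⟨Finset.filter_subset _ _, ?_, ?_⟩
  · rw [mem_supp]; exact ⟨by omega, hp0⟩
  · intro j hj
    obtain ⟨i, hij, hdi, hb2⟩ := hwin j hj
    refine ⟨i, ?_, hij, ?_⟩
    · rw [mem_supp]; exact ⟨by omega, hdi⟩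
    · rw [supp_sup hb hk ⟨hp0, hmk, hwin⟩]
      have : dlen b p - 1 + 1 = dlen b p := by omega
      rw [this]
      exact hb2

lemma fiber_card (hb : 2 ≤ b) (hk : 1 ≤ k) {S : Finset ℕ} (hS : S ∈ Valids k) :
    ((ddivisors b (rep b k)).filter fun p => supp b k p = S).card = (b-1) ^ S.card := by
  classical
  have hb1 : (1:ℕ) < b := by omega
  rw [Valids, Finset.mem_filter, Finset.mem_powerset] at hS
  obtain ⟨hSr, h0S, hwin⟩ := hS
  have hSne : S.Nonempty := ⟨0, h0S⟩
  have hMS : S.sup id ∈ S := sup_id_mem hSne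
  have hMk : S.sup id < k := Finset.mem_range.1 (hSr hMS)
  have hle_sup : ∀ x ∈ S, x ≤ S.sup id := fun x hx => Finset.le_sup (f := id) hx
  have henc_eq : ∀ (f : ∀ a ∈ S, ℕ) (K : ℕ), S ⊆ range K →
      (∑ x ∈ S.attach, f x.1 x.2 * b ^ (x.1 : ℕ))
        = ∑ i ∈ range K, (if h : i ∈ S then f i h else 0) * b ^ i := by
    intro f K hK
    calc (∑ x ∈ S.attach, f x.1 x.2 * b ^ (x.1 : ℕ))
        = ∑ x ∈ S.attach, (if h : (x:ℕ) ∈ S then f x h else 0) * b ^ (x.1 : ℕ) := by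
          apply Finset.sum_congr rfl
          intro x _
          simp [x.2]
    _ = ∑ i ∈ S, (if h : i ∈ S then f i h else 0) * b ^ i :=
          Finset.sum_attach S (fun i => (if h : i ∈ S then f i h else 0) * b ^ i)
    _ = ∑ i ∈ range K, (if h : i ∈ S then f i h else 0) * b ^ i := by
          apply Finset.sum_subset hK
          intro x _ hx
          simp [hx]
  have hglt : ∀ (f : ∀ a ∈ S, ℕ), (∀ a ha, f a ha ∈ Finset.Icc 1 (b-1)) →
      ∀ i, (if h : i ∈ S then f i h else 0) < b := by
    intro f hf i
    split
    · next h => have := hf i h; rw [Finset.mem_Icc] at this; omega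
    · omega
  have hdigit : ∀ (f : ∀ a ∈ S, ℕ), (∀ a ha, f a ha ∈ Finset.Icc 1 (b-1)) →
      ∀ i, digit b (∑ x ∈ S.attach, f x.1 x.2 * b ^ (x.1 : ℕ))
        i = if h : i ∈ S then f i h else 0 := by
    intro f hf i
    rw [henc_eq f k hSr, digit_sum hb1 _ (hglt f hf)]
    by_cases h : i < k
    · rw [if_pos h]
    · rw [if_neg h]
      have hns : i ∉ S := fun hc => h (Finset.mem_range.1 (hSr hc))
      simp [hns]
  rw [show ((b:ℕ)-1) ^ S.card = (S.pi fun _ => Finset.Icc 1 (b-1)).card by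
    rw [Finset.card_pi]
    rw [Finset.prod_congr rfl (fun a _ => by rw [Nat.card_Icc]; omega : ∀ a ∈ S, (Finset.Icc 1 (b-1)).card = b - 1)]
    rw [Finset.prod_const]]
  apply Finset.card_bij' (i := fun p _ => fun a (_ : a ∈ S) => digit b p a)
    (j := fun f _ => ∑ x ∈ S.attach, f x.1 x.2 * b ^ (x.1 : ℕ))
  · -- forward maps into pi
    intro p hp
    rw [Finset.mem_filter] at hp
    obtain ⟨hpd, hps⟩ := hp
    rw [Finset.mem_pi]
    intro a ha
    rw [← hps, mem_supp] at ha
    rw [Finset.mem_Icc]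
    have := digit_lt (b := b) (by omega) p a
    have := ha.2
    omega
  · -- the encoded number lands in the fiber
    intro f hf
    rw [Finset.mem_pi] at hf
    have hd := hdigit f hf
    have hsupp : supp b k (∑ x ∈ S.attach, f x.1 x.2 * b ^ (x.1 : ℕ)) = S := by
      ext i
      rw [mem_supp]
      constructor
      · rintro ⟨hik, hne⟩
        rw [hd i] at hne
        by_contra hc
        simp [hc] at hne
      · intro hi
        refine ⟨Finset.mem_range.1 (hSr hi), ?_⟩
        rw [hd i]
        have := hf i hi
        rw [Finset.mem_Icc] at this
        simp [hi]
        omega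
    have hdlen : dlen b (∑ x ∈ S.attach, f x.1 x.2 * b ^ (x.1 : ℕ)) = S.sup id + 1 := by
      have hSub : S ⊆ range (S.sup id + 1) :=
        fun x hx => Finset.mem_range.2 (by have := hle_sup x hx; omega)
      have h1 : (∑ x ∈ S.attach, f x.1 x.2 * b ^ (x.1 : ℕ)) < b ^ (S.sup id + 1) := by
        rw [henc_eq f (S.sup id + 1) hSub]
        exact sum_lt_pow _ (hglt f hf) _
      have h2 := dlen_le_of_lt hb1 h1
      have h3 : digit b (∑ x ∈ S.attach, f x.1 x.2 * b ^ (x.1 : ℕ)) (S.sup id) ≠ 0 := by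
        rw [hd (S.sup id)]
        have := hf (S.sup id) hMS
        rw [Finset.mem_Icc] at this
        simp [hMS]
        omega
      have h4 := lt_dlen_of_digit_ne_zero hb1 h3
      omega
    have hgood : Good b k (∑ x ∈ S.attach, f x.1 x.2 * b ^ (x.1 : ℕ)) := by
      refine ⟨?_, by omega, ?_⟩
      · rw [hd 0]
        have := hf 0 h0S
        rw [Finset.mem_Icc] at this
        simp [h0S]
        omega
      · intro j hj
        obtain ⟨i, hiS, hij, hjb⟩ := hwin j hj
        refine ⟨i, hij, ?_, ?_⟩
        · rw [hd i]
          have := hf i hiS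
          rw [Finset.mem_Icc] at this
          simp [hiS]
          omega
        · rw [hdlen]
          exact hjb
    rw [Finset.mem_filter]
    exact ⟨(mem_ddiv hb hk).2 hgood, hsupp⟩
  · -- left inverse
    intro p hp
    rw [Finset.mem_filter] at hp
    obtain ⟨hpd, hps⟩ := hp
    have hgood := (mem_ddiv hb hk).1 hpd
    have hplt : p < b ^ k := calc
      p < b ^ dlen b p := lt_pow_dlen hb1 p
      _ ≤ b ^ k := Nat.pow_le_pow_right (by omega) hgood.2.1
    refine Eq.trans (henc_eq (fun a (_ : a ∈ S) => digit b p a) k hSr) ?_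
    have hcg : ∀ i ∈ range k,
        (if h : i ∈ S then digit b p i else 0) * b ^ i = digit b p i * b ^ i := by
      intro i hi
      split
      · rfl
      · next h =>
        have hz : digit b p i = 0 := by
          by_contra hc
          exact h (hps ▸ mem_supp.2 ⟨Finset.mem_range.1 hi, hc⟩)
        rw [hz]
    rw [Finset.sum_congr rfl hcg]
    exact (eq_sum_digit hb1 k p hplt).symm
  · -- right inverse
    intro f hf
    rw [Finset.mem_pi] at hf
    funext a ha
    rw [hdigit f hf a]
    simp [ha]

lemma card_ddiv (hb : 2 ≤ b) (hk : 1 ≤ k) :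
    (ddivisors b (rep b k)).card = ∑ S ∈ Valids k, (b-1) ^ S.card := by
  classical
  rw [Finset.card_eq_sum_card_fiberwise
    (fun p hp => good_supp_valid hb hk ((mem_ddiv hb hk).1 hp))]
  exact Finset.sum_congr rfl fun S hS => fiber_card hb hk hS

/-! ### Partial sums and differences of lists -/

def psums : List ℕ → List ℕ
  | [] => [0]
  | a :: l => 0 :: (psums l).map (a + ·)

def dif : List ℕ → List ℕ
  | x :: y :: L => (y - x) :: dif (y :: L)
  | _ => []

lemma dif_nil : dif [] = [] := rfl
lemma dif_single (x : ℕ) : dif [x] = [] := rfl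
lemma dif_cons2 (x y : ℕ) (L : List ℕ) : dif (x :: y :: L) = (y - x) :: dif (y :: L) := rfl

lemma psums_ne_nil (l : List ℕ) : psums l ≠ [] := by cases l <;> simp [psums]

lemma psums_length (l : List ℕ) : (psums l).length = l.length + 1 := by
  induction l with
  | nil => rfl
  | cons a l ih => simp [psums, ih]

lemma psums_headI (l : List ℕ) : (psums l).headI = 0 := by cases l <;> simp [psums]

lemma zero_mem_psums (l : List ℕ) : 0 ∈ psums l := by cases l <;> simp [psums]

lemma mem_psums_le (l : List ℕ) : ∀ x ∈ psums l, x ≤ l.sum := by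
  induction l with
  | nil => simp [psums]
  | cons a l ih =>
    intro x hx
    simp only [psums, List.mem_cons, List.mem_map] at hx
    rcases hx with rfl | ⟨y, hy, rfl⟩
    · omega
    · have := ih y hy
      simp only [List.sum_cons]
      omega

lemma sum_mem_psums (l : List ℕ) : l.sum ∈ psums l := by
  induction l with
  | nil => simp [psums]
  | cons a l ih =>
    simp only [psums, List.sum_cons, List.mem_cons, List.mem_map]
    right
    exact ⟨l.sum, ih, rfl⟩

lemma psums_sorted (l : List ℕ) (hl : ∀ x ∈ l, 0 < x) : (psums l).Pairwise (· < ·) := by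
  induction l with
  | nil => simp [psums]
  | cons a l ih =>
    rw [psums, List.pairwise_cons]
    constructor
    · intro y hy
      rw [List.mem_map] at hy
      obtain ⟨x, _, rfl⟩ := hy
      have := hl a (by simp)
      omega
    · exact List.Pairwise.map _ (fun h => by omega)
        (ih fun x hx => hl x (List.mem_cons_of_mem a hx))

lemma dif_length (L : List ℕ) : (dif L).length = L.length - 1 := by
  induction L with
  | nil => rfl
  | cons x L ih =>
    cases L with
    | nil => rfl
    | cons y M => rw [dif_cons2]; simp at ih ⊢; omega

lemma dif_map_add (c : ℕ) : ∀ L : List ℕ, dif (L.map (c + ·)) = dif L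
  | [] => rfl
  | [x] => rfl
  | x :: y :: L => by
    rw [List.map_cons, List.map_cons, dif_cons2, dif_cons2]
    rw [← List.map_cons (f := (c + ·)) (a := y) (l := L), dif_map_add c (y :: L)]
    congr 1
    omega

lemma dif_psums (l : List ℕ) : dif (psums l) = l := by
  induction l with
  | nil => rfl
  | cons a l ih =>
    obtain ⟨m, M, hM⟩ : ∃ m M, psums l = m :: M := by
      cases hpl : psums l with
      | nil => exact absurd hpl (psums_ne_nil l)
      | cons m M => exact ⟨m, M, rfl⟩
    have hm : m = 0 := by
      have := psums_headI l
      rw [hM] at this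
      simpa using this
    subst hm
    have hmap := dif_map_add a (0 :: M)
    rw [List.map_cons] at hmap
    rw [psums, hM, List.map_cons, dif_cons2, hmap, ← hM, ih]
    norm_num

lemma psums_dif : ∀ L : List ℕ, L.Pairwise (· ≤ ·) → L ≠ [] →
    psums (dif L) = L.map (· - L.headI)
  | [], _, h => absurd rfl h
  | [x], _, _ => by simp [dif_single, psums]
  | x :: y :: M, hs, _ => by
    rw [List.pairwise_cons] at hs
    obtain ⟨hx, hs'⟩ := hs
    have ih := psums_dif (y :: M) hs' (by simp)
    simp only [List.headI] at ih
    rw [dif_cons2]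
    show 0 :: (psums (dif (y :: M))).map ((y - x) + ·) = _
    rw [ih, List.map_map]
    have hxy : x ≤ y := hx y (by simp)
    have hyM : ∀ z ∈ y :: M, y ≤ z := by
      intro z hz
      rcases List.mem_cons.1 hz with rfl | hz'
      · exact le_refl _
      · exact (List.pairwise_cons.1 hs').1 z hz'
    have hmapeq : (y :: M).map ((fun z => (y - x) + z) ∘ (· - y)) = (y :: M).map (· - x) := by
      apply List.map_congr_left
      intro z hz
      have := hyM z hz
      simp only [Function.comp_apply]
      omega
    rw [hmapeq]
    simp [Nat.sub_self]

lemma psums_dif_self (L : List ℕ) (hs : L.Pairwise (· ≤ ·)) (hne : L ≠ [])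
    (h0 : L.headI = 0) : psums (dif L) = L := by
  rw [psums_dif L hs hne, h0]
  simp

/-! ### Gap bounds vs successor conditions -/

lemma succ_of_gaps (c : ℕ) : ∀ L : List ℕ, L.Pairwise (· < ·) →
    (∀ g ∈ dif L, g ≤ c) → ∀ x ∈ L,
      (∀ y ∈ L, y ≤ x) ∨ ∃ y ∈ L, x < y ∧ y ≤ x + c := by
  intro L
  induction L with
  | nil => intro _ _ x hx; simp at hx
  | cons a L ih =>
    intro hs hg x hx
    rw [List.pairwise_cons] at hs
    obtain ⟨ha, hs'⟩ := hs
    rcases List.mem_cons.1 hx with rfl | hx'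
    · cases L with
      | nil => left; intro y hy; simp at hy; omega
      | cons bb M =>
        right
        refine ⟨bb, by simp, ha bb (by simp), ?_⟩
        have h1 : bb - x ≤ c := hg _ (by rw [dif_cons2]; simp)
        have h2 : x < bb := ha bb (by simp)
        omega
    · have hgL : ∀ g ∈ dif L, g ≤ c := by
        intro g hgm
        apply hg
        cases L with
        | nil => simp [dif_nil] at hgm
        | cons bb M => rw [dif_cons2]; exact List.mem_cons_of_mem _ hgm
      rcases ih hs' hgL x hx' with h | ⟨y, hy, h1, h2⟩
      · left
        intro y hy
        rcases List.mem_cons.1 hy with rfl | hy'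
        · exact le_of_lt (ha x hx')
        · exact h y hy'
      · right
        exact ⟨y, List.mem_cons_of_mem _ hy, h1, h2⟩

lemma gaps_of_succ (c T : ℕ) : ∀ L : List ℕ, L.Pairwise (· < ·) →
    (∀ x ∈ L, x ≤ T) →
    (∀ x ∈ L, x < T → ∃ y ∈ L, x < y ∧ y ≤ x + c) →
    ∀ g ∈ dif L, g ≤ c := by
  intro L
  induction L with
  | nil => intro _ _ _ g hgm; simp [dif_nil] at hgm
  | cons a L ih =>
    intro hs hub hsucc g hgm
    rw [List.pairwise_cons] at hs
    obtain ⟨ha, hs'⟩ := hs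
    cases L with
    | nil => simp [dif_single] at hgm
    | cons bb M =>
      rw [dif_cons2] at hgm
      rcases List.mem_cons.1 hgm with rfl | hgm'
      · -- g = bb - a
        have haT : a < T := lt_of_lt_of_le (ha bb (by simp)) (hub bb (by simp))
        obtain ⟨y, hy, h1, h2⟩ := hsucc a (by simp) haT
        rcases List.mem_cons.1 hy with rfl | hy'
        · omega
        · have : bb ≤ y := by
            rcases List.mem_cons.1 hy' with rfl | hy''
            · exact le_refl y
            · exact le_of_lt ((List.pairwise_cons.1 hs').1 y hy'')
          omega
      · -- g in dif (bb :: M)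
        apply ih hs' (fun x hx => hub x (List.mem_cons_of_mem _ hx)) ?_ g hgm'
        intro x hx hxT
        obtain ⟨y, hy, h1, h2⟩ := hsucc x (List.mem_cons_of_mem _ hx) hxT
        rcases List.mem_cons.1 hy with rfl | hy'
        · exfalso
          have : y < x := by
            rcases List.mem_cons.1 hx with rfl | hx''
            · exact ha x hx
            · exact ha x hx
          omega
        · exact ⟨y, hy', h1, h2⟩

/-! ### Window vs successor on finsets -/

lemma sup_lt_of_mem {S : Finset ℕ} (hSr : S ⊆ range k) (h0 : 0 ∈ S) : S.sup id < k :=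
  Finset.mem_range.1 (hSr (sup_id_mem ⟨0, h0⟩))

lemma window_to_succ {S : Finset ℕ} (h0 : 0 ∈ S) (hSr : S ⊆ range k)
    (hw : ∀ j < k, ∃ i ∈ S, i ≤ j ∧ j ≤ i + (k - (S.sup id + 1)))
    {x : ℕ} (hx : x ∈ S) (hxM : x < S.sup id) :
    ∃ y ∈ S, x < y ∧ y ≤ x + (k - S.sup id) := by
  have hMk : S.sup id < k := sup_lt_of_mem hSr h0
  obtain ⟨i, hiS, hij, hjb⟩ := hw (x + (k - S.sup id)) (by omega)
  exact ⟨i, hiS, by omega, by omega⟩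

lemma succ_to_window {S : Finset ℕ} (h0 : 0 ∈ S) (hSr : S ⊆ range k)
    (hsucc : ∀ x ∈ S, x < S.sup id → ∃ y ∈ S, x < y ∧ y ≤ x + (k - S.sup id)) :
    ∀ j < k, ∃ i ∈ S, i ≤ j ∧ j ≤ i + (k - (S.sup id + 1)) := by
  classical
  have hMk : S.sup id < k := sup_lt_of_mem hSr h0
  intro j hj
  have hne : (S.filter (fun z => z ≤ j)).Nonempty := ⟨0, Finset.mem_filter.2 ⟨h0, by omega⟩⟩
  have hiS : (S.filter (fun z => z ≤ j)).max' hne ∈ S :=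
    (Finset.mem_filter.1 ((S.filter (fun z => z ≤ j)).max'_mem hne)).1
  have hij : (S.filter (fun z => z ≤ j)).max' hne ≤ j :=
    (Finset.mem_filter.1 ((S.filter (fun z => z ≤ j)).max'_mem hne)).2
  have hmax : ∀ y ∈ S, y ≤ j → y ≤ (S.filter (fun z => z ≤ j)).max' hne := by
    intro y hy hyj
    apply Finset.le_max'
    rw [Finset.mem_filter]
    exact ⟨hy, hyj⟩
  by_cases hcase : j ≤ (S.filter (fun z => z ≤ j)).max' hne + (k - (S.sup id + 1))
  · exact ⟨_, hiS, hij, hcase⟩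
  · exfalso
    have hisup : (S.filter (fun z => z ≤ j)).max' hne ≤ S.sup id := Finset.le_sup (f := id) hiS
    have hiM : (S.filter (fun z => z ≤ j)).max' hne < S.sup id := by
      rcases lt_or_eq_of_le hisup with h | h
      · exact h
      · omega
    obtain ⟨y, hyS, h1, h2⟩ := hsucc _ hiS hiM
    have hyj : y ≤ j := by omega
    have := hmax y hyS hyj
    omega

lemma dif_entries_pos : ∀ L : List ℕ, L.Pairwise (· < ·) → ∀ g ∈ dif L, 0 < g := by
  intro L
  induction L with
  | nil => intro _ g hg; simp [dif_nil] at hg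
  | cons a L ih =>
    intro hs g hg
    rw [List.pairwise_cons] at hs
    obtain ⟨ha, hs'⟩ := hs
    cases L with
    | nil => simp [dif_single] at hg
    | cons bb M =>
      rw [dif_cons2] at hg
      rcases List.mem_cons.1 hg with rfl | hg'
      · have := ha bb (by simp); omega
      · exact ih hs' g hg'

/-! ### The composition associated to a valid support -/

def cOf (k : ℕ) (S : Finset ℕ) : List ℕ := (k - S.sup id) :: dif (S.sort (· ≤ ·))

lemma sort_headI_zero {S : Finset ℕ} (h0 : 0 ∈ S) : (S.sort (· ≤ ·)).headI = 0 := by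
  obtain ⟨a, L', hL⟩ : ∃ a L', S.sort (· ≤ ·) = a :: L' := by
    cases h : S.sort (· ≤ ·) with
    | nil =>
      exfalso
      have := (Finset.mem_sort (α := ℕ) (· ≤ ·)).2 h0
      rw [h] at this
      simp at this
    | cons a L' => exact ⟨a, L', rfl⟩
  have h0m : (0 : ℕ) ∈ a :: L' := hL ▸ (Finset.mem_sort (α := ℕ) (· ≤ ·)).2 h0
  have hs := Finset.pairwise_sort S (α := ℕ) (· ≤ ·)
  rw [hL, List.pairwise_cons] at hs
  rw [hL]
  show a = 0
  rcases List.mem_cons.1 h0m with h | h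
  · omega
  · have := hs.1 0 h; omega

lemma sort_ne_nil {S : Finset ℕ} (h0 : 0 ∈ S) : S.sort (· ≤ ·) ≠ [] := by
  intro h
  have := (Finset.mem_sort (α := ℕ) (· ≤ ·)).2 h0
  rw [h] at this
  simp at this

lemma psums_dif_sort {S : Finset ℕ} (h0 : 0 ∈ S) :
    psums (dif (S.sort (· ≤ ·))) = S.sort (· ≤ ·) :=
  psums_dif_self _ (Finset.pairwise_sort S _) (sort_ne_nil h0) (sort_headI_zero h0)

lemma sum_dif_sort {S : Finset ℕ} (h0 : 0 ∈ S) :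
    (dif (S.sort (· ≤ ·))).sum = S.sup id := by
  have hps := psums_dif_sort h0
  apply le_antisymm
  · have h1 := sum_mem_psums (dif (S.sort (· ≤ ·)))
    rw [hps] at h1
    exact Finset.le_sup (f := id) ((Finset.mem_sort _).1 h1)
  · have h2 : S.sup id ∈ S.sort (· ≤ ·) := (Finset.mem_sort _).2 (sup_id_mem ⟨0, h0⟩)
    rw [← hps] at h2
    exact mem_psums_le _ _ h2

lemma cOf_spec (hk : 1 ≤ k) {t : ℕ} {S : Finset ℕ}
    (hS : S ∈ Valids k) (hcard : S.card = t) :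
    (cOf k S).length = t ∧ (cOf k S).sum = k ∧ (∀ x ∈ cOf k S, 0 < x) ∧
      ∀ x ∈ cOf k S, x ≤ (cOf k S).headI := by
  classical
  rw [Valids, Finset.mem_filter, Finset.mem_powerset] at hS
  obtain ⟨hSr, h0S, hwin⟩ := hS
  have hMk : S.sup id < k := sup_lt_of_mem hSr h0S
  have hlen : (S.sort (· ≤ ·)).length = t := by rw [Finset.length_sort, hcard]
  have ht1 : 1 ≤ t := by
    rw [← hcard]
    exact Finset.card_pos.2 ⟨0, h0S⟩
  have hgaps : ∀ g ∈ dif (S.sort (· ≤ ·)), g ≤ k - S.sup id := by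
    apply gaps_of_succ (k - S.sup id) (S.sup id) _ ((List.sortedLT_iff_pairwise.1 (Finset.sortedLT_sort S)))
    · intro x hx
      exact Finset.le_sup (f := id) ((Finset.mem_sort _).1 hx)
    · intro x hx hxM
      obtain ⟨y, hy, h1, h2⟩ := window_to_succ h0S hSr hwin ((Finset.mem_sort _).1 hx) hxM
      exact ⟨y, (Finset.mem_sort _).2 hy, h1, h2⟩
  refine ⟨?_, ?_, ?_, ?_⟩
  · rw [cOf]
    simp only [List.length_cons, dif_length, hlen]
    omega
  · rw [cOf]
    simp only [List.sum_cons, sum_dif_sort h0S]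
    omega
  · intro x hx
    rw [cOf, List.mem_cons] at hx
    rcases hx with rfl | hx'
    · omega
    · exact dif_entries_pos _ ((List.sortedLT_iff_pairwise.1 (Finset.sortedLT_sort S))) x hx'
  · intro x hx
    rw [cOf, List.mem_cons] at hx
    rw [cOf]
    show x ≤ k - S.sup id
    rcases hx with rfl | hx'
    · exact le_refl _
    · exact hgaps x hx'

lemma cOf_inj (hk : 1 ≤ k) {S₁ S₂ : Finset ℕ}
    (h₁ : S₁ ∈ Valids k) (h₂ : S₂ ∈ Valids k) (h : cOf k S₁ = cOf k S₂) : S₁ = S₂ := by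
  classical
  rw [Valids, Finset.mem_filter] at h₁ h₂
  have h0₁ : 0 ∈ S₁ := h₁.2.1
  have h0₂ : 0 ∈ S₂ := h₂.2.1
  rw [cOf, cOf, List.cons.injEq] at h
  have hd : dif (S₁.sort (· ≤ ·)) = dif (S₂.sort (· ≤ ·)) := h.2
  have hsorteq : S₁.sort (· ≤ ·) = S₂.sort (· ≤ ·) := by
    rw [← psums_dif_sort h0₁, ← psums_dif_sort h0₂, hd]
  have := congrArg List.toFinset hsorteq
  rwa [Finset.sort_toFinset, Finset.sort_toFinset] at this

lemma cOf_surj (hk : 1 ≤ k) {t : ℕ} (l : List ℕ)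
    (hlen : l.length = t) (hsum : l.sum = k) (hpos : ∀ x ∈ l, 0 < x)
    (hbd : ∀ x ∈ l, x ≤ l.headI) (ht1 : 1 ≤ t) :
    ∃ S, (S ∈ Valids k ∧ S.card = t) ∧ cOf k S = l := by
  classical
  obtain ⟨c₁, rest, rfl⟩ : ∃ c₁ rest, l = c₁ :: rest := by
    cases l with
    | nil => simp at hlen; omega
    | cons c₁ rest => exact ⟨c₁, rest, rfl⟩
  have hc₁ : 0 < c₁ := hpos c₁ (by simp)
  have hrpos : ∀ x ∈ rest, 0 < x := fun x hx => hpos x (List.mem_cons_of_mem _ hx)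
  have hrsum : c₁ + rest.sum = k := by simpa using hsum
  have hsorted : (psums rest).Pairwise (· < ·) := psums_sorted rest hrpos
  have hnodup : (psums rest).Nodup := hsorted.nodup
  set S := (psums rest).toFinset with hSdef
  have hsortS : S.sort (· ≤ ·) = psums rest :=
    (List.toFinset_sort (· ≤ ·) hnodup).2 (hsorted.imp le_of_lt)
  have hmemS : ∀ x, x ∈ S ↔ x ∈ psums rest := by
    intro x; rw [hSdef, List.mem_toFinset]
  have h0S : 0 ∈ S := (hmemS 0).2 (zero_mem_psums rest)
  have hsup : S.sup id = rest.sum := by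
    apply le_antisymm
    · apply Finset.sup_le
      intro x hx
      exact mem_psums_le rest x ((hmemS x).1 hx)
    · exact Finset.le_sup (f := id) ((hmemS _).2 (sum_mem_psums rest))
  have hSr : S ⊆ range k := by
    intro x hx
    rw [Finset.mem_range]
    have := mem_psums_le rest x ((hmemS x).1 hx)
    omega
  have hgapbd : ∀ g ∈ dif (S.sort (· ≤ ·)), g ≤ k - S.sup id := by
    rw [hsortS, dif_psums, hsup]
    intro g hg
    have := hbd g (List.mem_cons_of_mem _ hg)
    simp only [List.headI] at this
    omega
  have hsucc : ∀ x ∈ S, x < S.sup id → ∃ y ∈ S, x < y ∧ y ≤ x + (k - S.sup id) := by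
    intro x hx hxM
    have hx' : x ∈ S.sort (· ≤ ·) := (Finset.mem_sort _).2 hx
    rcases succ_of_gaps (k - S.sup id) _ ((List.sortedLT_iff_pairwise.1 (Finset.sortedLT_sort S))) hgapbd x hx' with h | ⟨y, hy, h1, h2⟩
    · exfalso
      have : S.sup id ≤ x := h _ ((Finset.mem_sort _).2 (sup_id_mem ⟨0, h0S⟩))
      omega
    · exact ⟨y, (Finset.mem_sort _).1 hy, h1, h2⟩
  have hvalid : S ∈ Valids k := by
    rw [Valids, Finset.mem_filter, Finset.mem_powerset]
    exact ⟨hSr, h0S, succ_to_window h0S hSr hsucc⟩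
  refine ⟨S, ⟨hvalid, ?_⟩, ?_⟩
  · rw [hSdef, List.toFinset_card_of_nodup hnodup, psums_length]
    simp at hlen
    omega
  · rw [cOf, hsortS, dif_psums, hsup]
    congr 1
    omega

lemma T_eq (hk : 1 ≤ k) {t : ℕ} (ht : t ∈ Finset.Icc 1 k) :
    T k t = ((Valids k).filter fun S => S.card = t).card := by
  classical
  rw [Finset.mem_Icc] at ht
  have himg : ∀ l : List ℕ,
      (l.length = t ∧ l.sum = k ∧ (∀ x ∈ l, 0 < x) ∧ ∀ x ∈ l, x ≤ l.headI)
      ↔ l ∈ (((Valids k).filter fun S => S.card = t).image (cOf k)) := by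
    intro l
    constructor
    · rintro ⟨h1, h2, h3, h4⟩
      obtain ⟨S, ⟨hv, hc⟩, hS⟩ := cOf_surj hk l h1 h2 h3 h4 ht.1
      rw [Finset.mem_image]
      exact ⟨S, Finset.mem_filter.2 ⟨hv, hc⟩, hS⟩
    · intro hl
      rw [Finset.mem_image] at hl
      obtain ⟨S, hS, rfl⟩ := hl
      rw [Finset.mem_filter] at hS
      exact cOf_spec hk hS.1 hS.2
  calc T k t
      = Nat.card {l : List ℕ // l ∈ (((Valids k).filter fun S => S.card = t).image (cOf k))} :=
        Nat.card_congr (Equiv.subtypeEquivRight fun l => himg l)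
    _ = (((Valids k).filter fun S => S.card = t).image (cOf k)).card :=
        Nat.card_eq_finsetCard _
    _ = ((Valids k).filter fun S => S.card = t).card := by
        apply Finset.card_image_of_injOn
        intro S₁ h₁ S₂ h₂ h
        exact cOf_inj hk (Finset.mem_filter.1 h₁).1 (Finset.mem_filter.1 h₂).1 h

lemma regroup (hk : 1 ≤ k) : (∑ S ∈ Valids k, (b-1) ^ S.card)
    = ∑ t ∈ Finset.Icc 1 k, ((Valids k).filter fun S => S.card = t).card * (b-1) ^ t := by
  classical
  have hmaps : ∀ S ∈ Valids k, S.card ∈ Finset.Icc 1 k := by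
    intro S hS
    rw [Valids, Finset.mem_filter, Finset.mem_powerset] at hS
    obtain ⟨hsub, h0, _⟩ := hS
    rw [Finset.mem_Icc]
    constructor
    · exact Finset.card_pos.2 ⟨0, h0⟩
    · calc S.card ≤ (range k).card := Finset.card_le_card hsub
      _ = k := Finset.card_range k
  rw [← Finset.sum_fiberwise_of_maps_to hmaps (fun S => (b-1) ^ S.card)]
  apply Finset.sum_congr rfl
  intro t ht
  rw [Finset.sum_congr rfl (fun S hS => by rw [(Finset.mem_filter.1 hS).2] :
    ∀ S ∈ (Valids k).filter (fun S => S.card = t), (b-1) ^ S.card = (b-1) ^ t)]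
  rw [Finset.sum_const, smul_eq_mul]

end DP

/-- the number of base-`b` dismal divisors of the repunit
`(b^k - 1)/(b - 1)`. -/
theorem dismal_divisors_repunit (b : ℕ) (hb : 2 ≤ b) (k : ℕ) (hk : 1 ≤ k) :
    dnum b ((b ^ k - 1) / (b - 1)) = ∑ t ∈ Finset.Icc 1 k, T k t * (b - 1) ^ t := by
  classical
  unfold dnum
  rw [DP.rep_eq hb k, DP.card_ddiv hb hk, DP.regroup hk]
  apply Finset.sum_congr rfl
  intro t ht
  rw [DP.T_eq hk ht]
end

section
/- For every base b ≥ 2 and k ≥ 1, the number of base-b dismal divisors of the repunit (b^k−1)/(b−1) satisfies (b^k − 1)/k ≤ d_b((b^k−1)/(b−1)) ≤ (b−1)·b^{k−1}. -/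
namespace DA
open Finset

variable {b : ℕ}

lemma digit_lt (hb : 2 ≤ b) (n i : ℕ) : digit b n i < b :=
  Nat.mod_lt _ (by omega)

lemma digit_eq_zero {n i : ℕ} (h : n < b ^ i) : digit b n i = 0 := by
  simp [digit, Nat.div_eq_of_lt h]

lemma digit_eq_zero_of_le (hb : 2 ≤ b) {n i : ℕ} (h : n ≤ i) : digit b n i = 0 :=
  digit_eq_zero (lt_of_lt_of_le (Nat.lt_pow_self (n := n) (a := b) (by omega))
    (Nat.pow_le_pow_right (by omega) h))

lemma mod_pow (hb : 2 ≤ b) (n K : ℕ) :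
    n % b ^ K = ∑ j ∈ range K, digit b n j * b ^ j := by
  induction K with
  | zero => simp [Nat.mod_one]
  | succ K ih =>
    rw [Finset.sum_range_succ, ← ih, pow_succ, Nat.mod_mul, digit]
    ring

lemma self_eq_sum (hb : 2 ≤ b) {n K : ℕ} (h : n < b ^ K) :
    n = ∑ j ∈ range K, digit b n j * b ^ j := by
  rw [← mod_pow hb, Nat.mod_eq_of_lt h]

lemma digit_ext (hb : 2 ≤ b) {m n : ℕ} (h : ∀ i, digit b m i = digit b n i) : m = n := by
  have hm : m < b ^ (m + n) := lt_of_lt_of_le (Nat.lt_pow_self (n := m) (a := b) (by omega))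
    (Nat.pow_le_pow_right (by omega) (by omega))
  have hn : n < b ^ (m + n) := lt_of_lt_of_le (Nat.lt_pow_self (n := n) (a := b) (by omega))
    (Nat.pow_le_pow_right (by omega) (by omega))
  calc m = ∑ j ∈ range (m + n), digit b m j * b ^ j := self_eq_sum hb hm
    _ = ∑ j ∈ range (m + n), digit b n j * b ^ j := by simp_rw [h]
    _ = n := (self_eq_sum hb hn).symm

lemma val_lt (hb : 2 ≤ b) {c : ℕ → ℕ} (hc : ∀ i, c i < b) (K : ℕ) :
    ∑ i ∈ range K, c i * b ^ i < b ^ K := by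
  induction K with
  | zero => simp
  | succ K ih =>
    rw [Finset.sum_range_succ, pow_succ]
    have h1 : c K * b ^ K ≤ (b - 1) * b ^ K :=
      Nat.mul_le_mul_right _ (by have := hc K; omega)
    have h2 : (b - 1) * b ^ K + b ^ K = b ^ K * b := by
      rw [← Nat.succ_mul, Nat.succ_eq_add_one, Nat.sub_add_cancel (by omega : 1 ≤ b),
        Nat.mul_comm]
    omega

lemma digit_val (hb : 2 ≤ b) {c : ℕ → ℕ} (hc : ∀ i, c i < b) (K j : ℕ) :
    digit b (∑ i ∈ range K, c i * b ^ i) j = if j < K then c j else 0 := by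
  induction K with
  | zero => simp [digit]
  | succ K ih =>
    rw [Finset.sum_range_succ]
    rcases lt_trichotomy j K with hj | hj | hj
    · have hsplit : c K * b ^ K = (c K * b ^ (K - j - 1) * b) * b ^ j := by
        rw [mul_assoc, mul_assoc, ← pow_succ', ← pow_add]
        congr 2
        omega
      rw [digit, hsplit, Nat.add_mul_div_right _ _ (pow_pos (by omega : 0 < b) _),
        Nat.add_mul_mod_self_right, ← digit, ih]
      have h2 : j < K + 1 := by omega
      simp [hj, h2]
    · subst hj
      have hlt : ∑ i ∈ range j, c i * b ^ i < b ^ j := val_lt hb hc j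
      rw [digit, Nat.add_mul_div_right _ _ (pow_pos (by omega : 0 < b) _),
        Nat.div_eq_of_lt hlt, Nat.zero_add, Nat.mod_eq_of_lt (hc j)]
      simp
    · have hbig : (∑ i ∈ range K, c i * b ^ i) + c K * b ^ K < b ^ j := by
        have h1 := val_lt hb hc (K + 1)
        rw [Finset.sum_range_succ] at h1
        exact lt_of_lt_of_le h1 (Nat.pow_le_pow_right (by omega) (by omega))
      rw [digit_eq_zero hbig]
      have hnj : ¬ j < K + 1 := by omega
      simp [hnj]

lemma digit_dmul (hb : 2 ≤ b) (m n j : ℕ) :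
    digit b (dmul b m n) j =
      (Finset.range (j + 1)).sup fun i => min (digit b m i) (digit b n (j - i)) := by
  have hD : ∀ t : ℕ,
      ((Finset.range (t + 1)).sup fun i => min (digit b m i) (digit b n (t - i))) < b := by
    intro t
    have : ((Finset.range (t + 1)).sup fun i => min (digit b m i) (digit b n (t - i))) ≤ b - 1 :=
      Finset.sup_le fun i _ => le_trans (min_le_left _ _) (by have := digit_lt hb m i; omega)
    omega
  rw [dmul, digit_val hb hD]
  split_ifs with h
  · rfl
  · symm
    refine Nat.eq_zero_of_le_zero (Finset.sup_le fun i hi => ?_)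
    simp only [Finset.mem_range] at hi
    rcases le_or_gt m i with hm | hm
    · rw [digit_eq_zero_of_le hb hm]
      simp
    · rw [digit_eq_zero_of_le hb (show n ≤ j - i by omega)]
      simp


/-- The repunit with `l` ones. -/
def repk (b l : ℕ) : ℕ := ∑ i ∈ Finset.range l, b ^ i

lemma digit_repk (hb : 2 ≤ b) (l j : ℕ) :
    digit b (repk b l) j = if j < l then 1 else 0 := by
  have h := digit_val hb (c := fun _ => 1) (fun _ => lt_of_lt_of_le one_lt_two hb) l j
  simpa [repk] using h

lemma repk_lt (hb : 2 ≤ b) (l : ℕ) : repk b l < b ^ l := by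
  have h := val_lt hb (c := fun _ => 1) (fun _ => lt_of_lt_of_le one_lt_two hb) l
  simpa [repk] using h

lemma le_repk (hb : 2 ≤ b) {l : ℕ} (hl : 1 ≤ l) : b ^ (l - 1) ≤ repk b l :=
  Finset.single_le_sum (f := fun i => b ^ i) (fun _ _ => Nat.zero_le _)
    (Finset.mem_range.mpr (by omega))

lemma repk_pos (hb : 2 ≤ b) {l : ℕ} (hl : 1 ≤ l) : 0 < repk b l :=
  lt_of_lt_of_le (pow_pos (by omega : 0 < b) _) (le_repk hb hl)

lemma repk_eq (hb : 2 ≤ b) (k : ℕ) : (b ^ k - 1) / (b - 1) = repk b k := by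
  have key : (b - 1) * repk b k = b ^ k - 1 := by
    induction k with
    | zero => simp [repk]
    | succ k ih =>
      have h1 : repk b (k + 1) = repk b k + b ^ k := by
        simp [repk, Finset.sum_range_succ]
      have h2 : b ^ (k + 1) = b ^ k * b := pow_succ b k
      have h3 : 1 ≤ b ^ k := Nat.one_le_pow _ _ (by omega)
      have h4 : (b - 1) * (repk b k + b ^ k) = (b - 1) * repk b k + (b - 1) * b ^ k :=
        Nat.mul_add _ _ _
      have h5 : (b - 1) * b ^ k + b ^ k = b ^ k * b := by
        rw [← Nat.succ_mul, Nat.succ_eq_add_one, Nat.sub_add_cancel (by omega : 1 ≤ b),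
          Nat.mul_comm]
      rw [h1, h4, ih]
      omega
  rw [← key, Nat.mul_div_cancel_left _ (by omega : 0 < b - 1)]

lemma dlen_repk (hb : 2 ≤ b) {k : ℕ} (hk : 1 ≤ k) : dlen b (repk b k) = k := by
  have hne : repk b k ≠ 0 := by have := repk_pos hb hk; omega
  rw [dlen, Nat.digits_len b _ (by omega) hne,
    Nat.log_eq_of_pow_le_of_lt_pow (le_repk hb hk)
      (by rw [Nat.sub_add_cancel hk]; exact repk_lt hb k)]
  omega

lemma upper_bound (hb : 2 ≤ b) {k : ℕ} (hk : 1 ≤ k) :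
    dnum b (repk b k) ≤ (b - 1) * b ^ (k - 1) := by
  classical
  set T : Finset ℕ := (Finset.range (b ^ k)).filter (fun p => ¬ p % b = 0) with hT
  have hsub : ddivisors b (repk b k) ⊆ T := by
    intro p hp
    rw [ddivisors, Finset.mem_filter, Finset.mem_range, dlen_repk hb hk] at hp
    obtain ⟨hlt, q, hq⟩ := hp
    have hd : digit b (dmul b p q) 0 = 1 := by
      rw [hq, digit_repk hb, if_pos (by omega : (0:ℕ) < k)]
    rw [digit_dmul hb, Finset.range_one, Finset.sup_singleton] at hd
    have hp0 : digit b p 0 ≠ 0 := by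
      intro h0
      rw [h0] at hd
      simp at hd
    rw [Finset.mem_filter, Finset.mem_range]
    refine ⟨hlt, ?_⟩
    simpa [digit] using hp0
  have hmul : ∀ m : ℕ, (b - 1) * b ^ m + b ^ m = b ^ m * b := fun m => by
    rw [← Nat.succ_mul, Nat.succ_eq_add_one, Nat.sub_add_cancel (by omega : 1 ≤ b),
      Nat.mul_comm]
  have hcardT : T.card = (b - 1) * b ^ (k - 1) := by
    have hsplit := Finset.card_filter_add_card_filter_not
      (s := Finset.range (b ^ k)) (p := fun p => p % b = 0)
    have himg : (Finset.range (b ^ k)).filter (fun p => p % b = 0)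
        = (Finset.range (b ^ (k - 1))).image (fun m => b * m) := by
      ext x
      simp only [Finset.mem_filter, Finset.mem_range, Finset.mem_image]
      constructor
      · rintro ⟨hx, hx0⟩
        refine ⟨x / b, ?_, ?_⟩
        · have : b ^ k = b ^ (k - 1) * b := by
            rw [← pow_succ]
            congr 1
            omega
          rw [this] at hx
          exact Nat.div_lt_of_lt_mul (by rwa [Nat.mul_comm] at hx)
        · exact Nat.mul_div_cancel' (Nat.dvd_of_mod_eq_zero hx0)
      · rintro ⟨m, hm, rfl⟩
        constructor
        · have : b ^ k = b * b ^ (k - 1) := by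
            rw [← pow_succ']
            congr 1
            omega
          rw [this]
          exact (Nat.mul_lt_mul_left (show 0 < b by omega)).mpr hm
        · simp
    have hinj : ((Finset.range (b ^ (k - 1))).image (fun m => b * m)).card = b ^ (k - 1) := by
      rw [Finset.card_image_of_injective _ (fun x y h => Nat.eq_of_mul_eq_mul_left (by omega) h),
        Finset.card_range]
    have hpk : b ^ k = b ^ (k - 1) * b := by
      rw [← pow_succ]; congr 1; omega
    have hm2 := hmul (k - 1)
    have hr : (Finset.range (b ^ k)).card = b ^ k := Finset.card_range _
    rw [himg, hinj, hr] at hsplit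
    have hpk' : b ^ (k - 1) ≤ b ^ k := by
      rw [hpk]; exact Nat.le_mul_of_pos_right _ (by omega)
    have hTc : T.card = (filter (fun a => ¬a % b = 0) (range (b ^ k))).card := rfl
    omega
  rw [dnum, ← hcardT]
  exact Finset.card_le_card hsub


section Lower
open scoped Classical

/-- distance to the next nonzero digit of `n` (cyclically mod `k`) after position `a`. -/
noncomputable def nxt (b k n a : ℕ) : ℕ :=
  if h : ∃ j, 0 < j ∧ digit b n ((a + j) % k) ≠ 0 then Nat.find h else 0

variable {k n : ℕ}

lemma nxt_ex (hk : 0 < k) (hsupp : ∃ i, i < k ∧ digit b n i ≠ 0) (a : ℕ) :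
    ∃ j, 0 < j ∧ digit b n ((a + j) % k) ≠ 0 := by
  obtain ⟨i0, hi0k, hi0⟩ := hsupp
  refine ⟨k - a % k + i0, by have := Nat.mod_lt a hk; omega, ?_⟩
  have hmod : a + (k - a % k + i0) = i0 + k * (a / k + 1) := by
    have h1 : k * (a / k) + a % k = a := Nat.div_add_mod a k
    have h2 := Nat.mod_lt a hk
    have h3 : k * (a / k + 1) = k * (a / k) + k := by ring
    omega
  rw [hmod, Nat.add_mul_mod_self_left, Nat.mod_eq_of_lt hi0k]
  exact hi0

lemma nxt_pos (hk : 0 < k) (hsupp : ∃ i, i < k ∧ digit b n i ≠ 0) (a : ℕ) :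
    0 < nxt b k n a := by
  rw [nxt, dif_pos (nxt_ex hk hsupp a)]
  exact (Nat.find_spec (nxt_ex hk hsupp a)).1

lemma nxt_digit (hk : 0 < k) (hsupp : ∃ i, i < k ∧ digit b n i ≠ 0) (a : ℕ) :
    digit b n ((a + nxt b k n a) % k) ≠ 0 := by
  rw [nxt, dif_pos (nxt_ex hk hsupp a)]
  exact (Nat.find_spec (nxt_ex hk hsupp a)).2

lemma nxt_min (hk : 0 < k) (hsupp : ∃ i, i < k ∧ digit b n i ≠ 0) {a j : ℕ}
    (h0 : 0 < j) (hj : j < nxt b k n a) : digit b n ((a + j) % k) = 0 := by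
  rw [nxt, dif_pos (nxt_ex hk hsupp a)] at hj
  by_contra h
  exact Nat.find_min (nxt_ex hk hsupp a) hj ⟨h0, h⟩

lemma nxt_le_k (hk : 0 < k) (hsupp : ∃ i, i < k ∧ digit b n i ≠ 0) (a : ℕ) :
    nxt b k n a ≤ k := by
  obtain ⟨i0, hi0k, hi0⟩ := hsupp
  have hal := Nat.mod_lt a hk
  have hdm : k * (a / k) + a % k = a := Nat.div_add_mod a k
  rcases lt_or_ge (a % k) i0 with hc | hc
  · have hj : 0 < i0 - a % k ∧ digit b n ((a + (i0 - a % k)) % k) ≠ 0 := by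
      constructor
      · omega
      · have hmod : a + (i0 - a % k) = i0 + k * (a / k) := by omega
        rw [hmod, Nat.add_mul_mod_self_left, Nat.mod_eq_of_lt hi0k]
        exact hi0
    rw [nxt, dif_pos ⟨_, hj⟩]
    exact le_trans (Nat.find_le hj) (by omega)
  · have hj : 0 < k - a % k + i0 ∧ digit b n ((a + (k - a % k + i0)) % k) ≠ 0 := by
      constructor
      · omega
      · have hmod : a + (k - a % k + i0) = i0 + k * (a / k + 1) := by
          have h3 : k * (a / k + 1) = k * (a / k) + k := by ring
          omega
        rw [hmod, Nat.add_mul_mod_self_left, Nat.mod_eq_of_lt hi0k]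
        exact hi0
    rw [nxt, dif_pos ⟨_, hj⟩]
    exact le_trans (Nat.find_le hj) (by omega)

lemma nxt_mod (hk : 0 < k) (hsupp : ∃ i, i < k ∧ digit b n i ≠ 0) (a : ℕ) :
    nxt b k n (a % k) = nxt b k n a := by
  have e1 := nxt_ex hk hsupp a
  have e2 : ∃ j, 0 < j ∧ digit b n ((a % k + j) % k) ≠ 0 := by
    obtain ⟨j, hj0, hjd⟩ := e1
    exact ⟨j, hj0, by rwa [Nat.mod_add_mod]⟩
  rw [nxt, nxt, dif_pos e2, dif_pos e1]
  apply le_antisymm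
  · refine Nat.find_le ⟨(Nat.find_spec e1).1, ?_⟩
    rw [Nat.mod_add_mod]
    exact (Nat.find_spec e1).2
  · refine Nat.find_le ⟨(Nat.find_spec e2).1, ?_⟩
    rw [← Nat.mod_add_mod]
    exact (Nat.find_spec e2).2

/-- position realizing the longest cyclic run of zeros just after it -/
noncomputable def astar (b k n : ℕ) : ℕ :=
  if h : (Finset.range k).Nonempty then
    Classical.choose (Finset.exists_max_image (Finset.range k) (nxt b k n) h) else 0

lemma astar_spec (hk : 0 < k) :
    astar b k n < k ∧ ∀ a, a < k → nxt b k n a ≤ nxt b k n (astar b k n) := by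
  have hne : (Finset.range k).Nonempty := ⟨0, Finset.mem_range.mpr hk⟩
  rw [astar, dif_pos hne]
  obtain ⟨h1, h2⟩ := Classical.choose_spec (Finset.exists_max_image (Finset.range k) (nxt b k n) hne)
  exact ⟨Finset.mem_range.mp h1, fun a ha => h2 a (Finset.mem_range.mpr ha)⟩

lemma nxt_le_astar (hk : 0 < k) (hsupp : ∃ i, i < k ∧ digit b n i ≠ 0) (a : ℕ) :
    nxt b k n a ≤ nxt b k n (astar b k n) := by
  rw [← nxt_mod hk hsupp a]
  exact (astar_spec hk).2 _ (Nat.mod_lt a hk)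

lemma digit_astar (hk : 0 < k) (hsupp : ∃ i, i < k ∧ digit b n i ≠ 0) :
    digit b n (astar b k n) ≠ 0 := by
  intro h0
  set A := astar b k n + (k - 1) with hA
  have hunf : nxt b k n A = Nat.find (nxt_ex hk hsupp A) := dif_pos (nxt_ex hk hsupp A)
  have hlt : nxt b k n (astar b k n) < nxt b k n A := by
    rw [hunf, Nat.lt_find_iff]
    intro j hj hP
    obtain ⟨hj0, hjd⟩ := hP
    have hastar := (astar_spec (b := b) (n := n) hk).1
    have hmod : (A + j) % k = (astar b k n + (j - 1)) % k := by
      have : A + j = astar b k n + (j - 1) + k := by omega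
      rw [this, Nat.add_mod_right]
    rw [hmod] at hjd
    rcases Nat.eq_or_lt_of_le hj0 with h1 | h1
    · have hj1 : astar b k n + (j - 1) = astar b k n := by omega
      rw [hj1, Nat.mod_eq_of_lt hastar] at hjd
      exact hjd h0
    · exact hjd (nxt_min hk hsupp (by omega) (by omega))
  exact absurd hlt (not_lt.mpr (nxt_le_astar hk hsupp A))

noncomputable def tfun (b k n : ℕ) : ℕ := (astar b k n + nxt b k n (astar b k n)) % k

noncomputable def rot (b k s m : ℕ) : ℕ :=
  ∑ j ∈ Finset.range k, digit b m ((j + s) % k) * b ^ j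

noncomputable def phi (b k n : ℕ) : ℕ := rot b k (tfun b k n) n

lemma rot_lt (hb : 2 ≤ b) (s m : ℕ) : rot b k s m < b ^ k :=
  val_lt hb (fun i => digit_lt hb m _) k

lemma digit_rot (hb : 2 ≤ b) (s m j : ℕ) :
    digit b (rot b k s m) j = if j < k then digit b m ((j + s) % k) else 0 :=
  digit_val hb (fun i => digit_lt hb m _) k j

lemma digit_phi (hb : 2 ≤ b) (hk : 0 < k) (j : ℕ) :
    digit b (phi b k n) j =
      if j < k then digit b n ((j + astar b k n + nxt b k n (astar b k n)) % k) else 0 := by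
  rw [phi, digit_rot hb]
  split_ifs with h
  · rw [tfun, Nat.add_comm j _, Nat.mod_add_mod, Nat.add_comm (astar b k n + _) j,
      ← Nat.add_assoc]
  · rfl

lemma digit_phi_zero (hb : 2 ≤ b) (hk : 0 < k) (hsupp : ∃ i, i < k ∧ digit b n i ≠ 0) :
    digit b (phi b k n) 0 ≠ 0 := by
  rw [digit_phi hb hk, if_pos hk, Nat.zero_add]
  exact nxt_digit hk hsupp (astar b k n)

lemma digit_phi_top (hb : 2 ≤ b) (hk : 0 < k) (hsupp : ∃ i, i < k ∧ digit b n i ≠ 0)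
    {i : ℕ} (hik : i < k) (hbig : k < i + nxt b k n (astar b k n)) :
    digit b (phi b k n) i = 0 := by
  set N := nxt b k n (astar b k n) with hN
  set s := i + N - k with hs
  have hs1 : 0 < s := by omega
  have hs2 : s < N := by omega
  rw [digit_phi hb hk, if_pos hik]
  have hmod : (i + astar b k n + N) % k = (astar b k n + s) % k := by
    have : i + astar b k n + N = astar b k n + s + k := by omega
    rw [this, Nat.add_mod_right]
  rw [hmod]
  exact nxt_min hk hsupp hs1 hs2

lemma phi_dvd (hb : 2 ≤ b) (hk : 0 < k) (hsupp : ∃ i, i < k ∧ digit b n i ≠ 0) :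
    dmul b (phi b k n) (repk b (nxt b k n (astar b k n))) = repk b k := by
  set N := nxt b k n (astar b k n) with hN
  have hN0 : 0 < N := nxt_pos hk hsupp _
  have hNk : N ≤ k := nxt_le_k hk hsupp _
  apply digit_ext hb
  intro j
  rw [digit_dmul hb, digit_repk hb]
  rcases lt_or_ge j k with hjk | hjk
  · rw [if_pos hjk]
    apply le_antisymm
    · refine Finset.sup_le fun i _ => ?_
      refine le_trans (min_le_right _ _) ?_
      rw [digit_repk hb]
      split_ifs <;> omega
    · rcases lt_or_ge j N with hjN | hjN
      · refine le_trans ?_ (Finset.le_sup (Finset.mem_range.mpr (by omega : 0 < j + 1)))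
        have h1 := digit_phi_zero hb hk hsupp
        have h2 : digit b (repk b N) (j - 0) = 1 := by
          rw [digit_repk hb, if_pos (by omega)]
        rw [h2]
        omega
      · obtain ⟨j', hj'0, hj'd⟩ : ∃ j', 0 < j' ∧ j' ≤ N ∧
            digit b n ((j - N + tfun b k n + j') % k) ≠ 0 := by
          have h1 := nxt_digit hk hsupp (j - N + tfun b k n)
          have h2 := nxt_le_astar hk hsupp (j - N + tfun b k n)
          exact ⟨nxt b k n (j - N + tfun b k n), nxt_pos hk hsupp _, h2, h1⟩
        obtain ⟨hj'N, hj'd⟩ := hj'd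
        set i := j - N + j' with hi
        have hij : i < j + 1 := by omega
        refine le_trans ?_ (Finset.le_sup (Finset.mem_range.mpr hij))
        have hphii : digit b (phi b k n) i ≠ 0 := by
          rw [phi, digit_rot hb, if_pos (by omega : i < k)]
          have : (i + tfun b k n) = (j - N + tfun b k n + j') := by omega
          rw [this]
          exact hj'd
        have hq : digit b (repk b N) (j - i) = 1 := by
          rw [digit_repk hb, if_pos (by omega)]
        rw [hq]
        omega
  · rw [if_neg (by omega)]
    refine Nat.eq_zero_of_le_zero (Finset.sup_le fun i hi => ?_)
    rw [Finset.mem_range] at hi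
    rcases lt_or_ge i k with hik | hik
    · rcases le_or_gt N (j - i) with hd | hd
      · rw [digit_repk hb, if_neg (by omega)]
        simp
      · rw [digit_phi_top hb hk hsupp hik (by omega)]
        simp
    · rw [phi, digit_rot hb, if_neg (by omega)]
      simp

lemma phi_lt (hb : 2 ≤ b) : phi b k n < b ^ k := rot_lt hb _ _

lemma recover (hb : 2 ≤ b) (hk : 0 < k) (hnk : n < b ^ k) :
    rot b k ((k - tfun b k n) % k) (phi b k n) = n := by
  set t := tfun b k n with ht
  have htk : t < k := Nat.mod_lt _ hk
  set s := (k - t) % k with hs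
  have hst : (s + t) % k = 0 := by
    rcases Nat.eq_zero_or_pos t with h0 | h0
    · rw [hs, h0, Nat.sub_zero, Nat.mod_self, Nat.add_zero, Nat.zero_mod]
    · have : s = k - t := by rw [hs]; exact Nat.mod_eq_of_lt (by omega)
      rw [this, Nat.sub_add_cancel (by omega), Nat.mod_self]
  rw [rot]
  have hdig : ∀ j ∈ Finset.range k,
      digit b (phi b k n) ((j + s) % k) * b ^ j = digit b n j * b ^ j := by
    intro j hj
    rw [Finset.mem_range] at hj
    congr 1
    rw [phi, digit_rot hb, if_pos (Nat.mod_lt _ hk), Nat.mod_add_mod]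
    have : (j + s + t) % k = j := by
      rw [Nat.add_assoc, Nat.add_mod, hst, Nat.add_zero, Nat.mod_eq_of_lt hj,
        Nat.mod_eq_of_lt hj]
    rw [this]
  rw [Finset.sum_congr rfl hdig]
  exact (self_eq_sum hb hnk).symm

lemma supp_of_ne (hb : 2 ≤ b) (hn0 : n ≠ 0) (hnk : n < b ^ k) :
    ∃ i, i < k ∧ digit b n i ≠ 0 := by
  by_contra h
  push_neg at h
  apply hn0
  rw [self_eq_sum hb hnk]
  refine Finset.sum_eq_zero fun i hi => ?_
  rw [h i (Finset.mem_range.mp hi), Nat.zero_mul]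

lemma lower_bound (hb : 2 ≤ b) {k : ℕ} (hk : 0 < k) :
    b ^ k - 1 ≤ k * dnum b (repk b k) := by
  classical
  set S : Finset ℕ := Finset.Ico 1 (b ^ k) with hS
  have hmem : ∀ n ∈ S, n ≠ 0 ∧ n < b ^ k := by
    intro n hn
    rw [hS, Finset.mem_Ico] at hn
    omega
  have himg : ∀ n ∈ S, phi b k n ∈ ddivisors b (repk b k) := by
    intro n hn
    obtain ⟨hn0, hnk⟩ := hmem n hn
    have hsupp := supp_of_ne hb hn0 hnk
    rw [ddivisors, Finset.mem_filter, Finset.mem_range, dlen_repk hb hk]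
    exact ⟨phi_lt hb, ⟨_, phi_dvd hb hk hsupp⟩⟩
  have hfib : ∀ p ∈ S.image (phi b k), (S.filter fun a => phi b k a = p).card ≤ k := by
    intro p _
    have hsub : (S.filter fun a => phi b k a = p) ⊆
        (Finset.range k).image fun s => rot b k s p := by
      intro n hn
      rw [Finset.mem_filter] at hn
      obtain ⟨hnS, hp⟩ := hn
      obtain ⟨hn0, hnk⟩ := hmem n hnS
      rw [Finset.mem_image]
      exact ⟨(k - tfun b k n) % k, Finset.mem_range.mpr (Nat.mod_lt _ hk),
        by rw [← hp]; exact recover hb hk hnk⟩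
    calc (S.filter fun a => phi b k a = p).card ≤ _ := Finset.card_le_card hsub
      _ ≤ (Finset.range k).card := Finset.card_image_le
      _ = k := Finset.card_range k
  have h1 : S.card ≤ k * (S.image (phi b k)).card :=
    Finset.card_le_mul_card_image S k hfib
  have h2 : (S.image (phi b k)).card ≤ dnum b (repk b k) := by
    rw [dnum]
    refine Finset.card_le_card fun p hp => ?_
    rw [Finset.mem_image] at hp
    obtain ⟨n, hn, rfl⟩ := hp
    exact himg n hn
  have hScard : S.card = b ^ k - 1 := by rw [hS, Nat.card_Ico]
  calc b ^ k - 1 = S.card := hScard.symm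
    _ ≤ k * (S.image (phi b k)).card := h1
    _ ≤ k * dnum b (repk b k) := Nat.mul_le_mul_left k h2

end Lower
end DA


/-- bounds on the number of base-`b` dismal divisors of the
repunit `(b^k - 1)/(b - 1)`: `(b^k - 1)/k ≤ d_b ≤ (b-1)·b^(k-1)`. -/
theorem dismal_divisors_repunit_bounds (b : ℕ) (hb : 2 ≤ b) (k : ℕ) (hk : 1 ≤ k) :
    b ^ k - 1 ≤ k * dnum b ((b ^ k - 1) / (b - 1)) ∧
    dnum b ((b ^ k - 1) / (b - 1)) ≤ (b - 1) * b ^ (k - 1) := by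
  rw [DA.repk_eq hb k]
  exact ⟨DA.lower_bound hb hk, DA.upper_bound hb hk⟩
end

section
/- In base b dismal arithmetic, σ_b(n) = n if and only if n ≡ b−1 (mod b), where σ_b(n) is the dismal sum of all dismal divisors of n. Moreover, if len_b(n) = k then n ≤ σ_b(n) ≤ b^k − 1 (ordinary integer inequalities). -/
/-- The dismal sum of all dismal divisors of `n`. -/
noncomputable def dsigma (b n : ℕ) : ℕ := ddigitSum b (ddivisors b n)

/- ### Auxiliary lemmas -/

section Aux
variable {b : ℕ}

lemma digit_lt (hb : 2 ≤ b) (n i : ℕ) : digit b n i < b :=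
  Nat.mod_lt _ (by omega)

lemma digit_eq_zero (hb : 2 ≤ b) {n i : ℕ} (h : n < b ^ i) : digit b n i = 0 := by
  unfold digit
  rw [Nat.div_eq_of_lt h, Nat.zero_mod]

lemma digit_zero (n : ℕ) : digit b n 0 = n % b := by
  simp [digit]

lemma digit_sum_mod (n m : ℕ) :
    ∑ i ∈ Finset.range m, digit b n i * b ^ i = n % b ^ m := by
  induction m with
  | zero => simp [Nat.mod_one]
  | succ m ih =>
    rw [Finset.sum_range_succ, ih, pow_succ, Nat.mod_mul]
    unfold digit
    ring

lemma sum_digit_lt (hb : 2 ≤ b) {c : ℕ → ℕ} (hc : ∀ i, c i < b) (m : ℕ) :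
    ∑ i ∈ Finset.range m, c i * b ^ i < b ^ m := by
  induction m with
  | zero => simp
  | succ m ih =>
    rw [Finset.sum_range_succ, pow_succ]
    have h1 : c m * b ^ m ≤ (b - 1) * b ^ m :=
      Nat.mul_le_mul_right _ (by have := hc m; omega)
    have h3 : b ^ m + (b - 1) * b ^ m = b ^ m * b := by
      have hb1 : b - 1 + 1 = b := by omega
      calc b ^ m + (b - 1) * b ^ m = (b - 1 + 1) * b ^ m := by ring
      _ = b ^ m * b := by rw [hb1]; ring
    linarith [h1, ih, h3]

lemma digit_sum_eq (hb : 2 ≤ b) {c : ℕ → ℕ} (hc : ∀ i, c i < b) (m j : ℕ) :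
    digit b (∑ i ∈ Finset.range m, c i * b ^ i) j = if j < m then c j else 0 := by
  have hb0 : 0 < b := by omega
  split_ifs with h
  · -- j < m
    set B := ∑ i ∈ Finset.range (m - (j + 1)), c (j + 1 + i) * b ^ i with hB
    have hsplit : ∑ i ∈ Finset.range m, c i * b ^ i
        = (∑ i ∈ Finset.range j, c i * b ^ i) + b ^ j * (c j + b * B) := by
      rw [Finset.range_eq_Ico, ← Finset.sum_Ico_consecutive _ (Nat.zero_le (j + 1)) h,
        ← Finset.range_eq_Ico, Finset.sum_range_succ, Finset.sum_Ico_eq_sum_range]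
      have htail : ∑ i ∈ Finset.range (m - (j + 1)), c (j + 1 + i) * b ^ (j + 1 + i)
          = b ^ j * (b * B) := by
        rw [hB, Finset.mul_sum, Finset.mul_sum]
        apply Finset.sum_congr rfl
        intro i _
        ring
      rw [htail]
      ring
    rw [hsplit]
    unfold digit
    have hS : (∑ i ∈ Finset.range j, c i * b ^ i) < b ^ j := sum_digit_lt hb hc j
    rw [Nat.add_mul_div_left _ _ (pow_pos hb0 _), Nat.div_eq_of_lt hS,
      Nat.zero_add, Nat.add_mul_mod_self_left, Nat.mod_eq_of_lt (hc j)]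
  · -- m ≤ j
    have hlt : (∑ i ∈ Finset.range m, c i * b ^ i) < b ^ j :=
      lt_of_lt_of_le (sum_digit_lt hb hc m) (Nat.pow_le_pow_right hb0 (by omega))
    exact digit_eq_zero hb hlt

/-- The convolution digit of `dmul`. -/
def dconv (b m n k : ℕ) : ℕ :=
  (Finset.range (k + 1)).sup fun i => min (digit b m i) (digit b n (k - i))

lemma dconv_lt (hb : 2 ≤ b) (m n k : ℕ) : dconv b m n k < b := by
  apply (Finset.sup_lt_iff (show (⊥ : ℕ) < b by simp only [bot_eq_zero]; omega)).2
  intro i _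
  exact lt_of_le_of_lt (min_le_left _ _) (digit_lt hb m i)

lemma dmul_eq (m n : ℕ) :
    dmul b m n = ∑ k ∈ Finset.range (m + n + 1), dconv b m n k * b ^ k := rfl

lemma digit_dmul (hb : 2 ≤ b) (m n k : ℕ) :
    digit b (dmul b m n) k = if k < m + n + 1 then dconv b m n k else 0 := by
  rw [dmul_eq]
  exact digit_sum_eq hb (dconv_lt hb m n) _ k

lemma digit_base_sub_one_zero (hb : 2 ≤ b) : digit b (b - 1) 0 = b - 1 := by
  rw [digit_zero, Nat.mod_eq_of_lt (by omega)]

lemma digit_base_sub_one (hb : 2 ≤ b) {j : ℕ} (hj : 0 < j) : digit b (b - 1) j = 0 := by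
  apply digit_eq_zero hb
  calc b - 1 < b ^ 1 := by simpa using Nat.sub_lt (by omega) one_pos
  _ ≤ b ^ j := Nat.pow_le_pow_right (by omega) hj

lemma dconv_base_sub_one_right (hb : 2 ≤ b) (n k : ℕ) :
    dconv b n (b - 1) k = digit b n k := by
  apply le_antisymm
  · apply Finset.sup_le
    intro i hi
    rw [Finset.mem_range] at hi
    rcases eq_or_lt_of_le (Nat.lt_succ_iff.1 hi) with h | h
    · subst h
      simp [digit_base_sub_one_zero hb]
    · rw [digit_base_sub_one hb (by omega)]
      simp
  · have hk : k ∈ Finset.range (k + 1) := Finset.self_mem_range_succ k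
    have := Finset.le_sup (f := fun i => min (digit b n i) (digit b (b - 1) (k - i))) hk
    simp [digit_base_sub_one_zero hb, Nat.le_sub_one_of_lt (digit_lt hb n k)] at this
    exact this
  
lemma dconv_base_sub_one_left (hb : 2 ≤ b) (n k : ℕ) :
    dconv b (b - 1) n k = digit b n k := by
  apply le_antisymm
  · apply Finset.sup_le
    intro i hi
    rcases Nat.eq_zero_or_pos i with h | h
    · subst h
      simp only [digit_base_sub_one_zero hb, Nat.sub_zero]
      exact min_le_right _ _
    · rw [digit_base_sub_one hb h]
      simp
  · have hk : (0 : ℕ) ∈ Finset.range (k + 1) := Finset.mem_range.2 (by omega)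
    have := Finset.le_sup (f := fun i => min (digit b (b - 1) i) (digit b n (k - i))) hk
    simp [digit_base_sub_one_zero hb, Nat.le_sub_one_of_lt (digit_lt hb n k)] at this
    exact this

lemma sum_digits_eq_self (hb : 2 ≤ b) {n m : ℕ} (h : n < b ^ m) :
    ∑ i ∈ Finset.range m, digit b n i * b ^ i = n := by
  rw [digit_sum_mod, Nat.mod_eq_of_lt h]

lemma lt_pow_add (hb : 2 ≤ b) (n c : ℕ) : n < b ^ (n + c) :=
  lt_of_lt_of_le (Nat.lt_pow_self (by omega : 1 < b) : n < b ^ n) (Nat.pow_le_pow_right (by omega) (by omega))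

lemma dmul_base_sub_one_right (hb : 2 ≤ b) (n : ℕ) : dmul b n (b - 1) = n := by
  rw [dmul_eq]
  simp_rw [dconv_base_sub_one_right hb]
  apply sum_digits_eq_self hb
  calc n < b ^ n := Nat.lt_pow_self (by omega)
  _ ≤ b ^ (n + (b - 1) + 1) := Nat.pow_le_pow_right (by omega) (by omega)

lemma dmul_base_sub_one_left (hb : 2 ≤ b) (n : ℕ) : dmul b (b - 1) n = n := by
  rw [dmul_eq]
  simp_rw [dconv_base_sub_one_left hb]
  apply sum_digits_eq_self hb
  calc n < b ^ n := Nat.lt_pow_self (by omega)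
  _ ≤ b ^ (b - 1 + n + 1) := Nat.pow_le_pow_right (by omega) (by omega)

lemma mem_ddivisors {p n : ℕ} : p ∈ ddivisors b n ↔ p < b ^ dlen b n ∧ DDvd b p n := by
  classical
  simp [ddivisors, Finset.mem_filter, Finset.mem_range]

lemma self_lt_pow_dlen (hb : 2 ≤ b) (n : ℕ) : n < b ^ dlen b n :=
  Nat.lt_base_pow_length_digits (by omega)

lemma one_le_dlen (hb : 2 ≤ b) {n : ℕ} (hn : 0 < n) : 1 ≤ dlen b n := by
  have : Nat.digits b n ≠ [] := Nat.digits_ne_nil_iff_ne_zero.2 (by omega)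
  have := List.length_pos_iff.2 this
  exact this

lemma self_mem_ddivisors (hb : 2 ≤ b) (n : ℕ) : n ∈ ddivisors b n :=
  mem_ddivisors.2 ⟨self_lt_pow_dlen hb n, ⟨b - 1, dmul_base_sub_one_right hb n⟩⟩

lemma base_sub_one_mem_ddivisors (hb : 2 ≤ b) {n : ℕ} (hn : 0 < n) :
    b - 1 ∈ ddivisors b n := by
  apply mem_ddivisors.2
  constructor
  · calc b - 1 < b ^ 1 := by simpa using Nat.sub_lt (by omega) one_pos
    _ ≤ b ^ dlen b n := Nat.pow_le_pow_right (by omega) (one_le_dlen hb hn)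
  · exact ⟨n, dmul_base_sub_one_left hb n⟩

lemma pos_digit_imp_pow_le {n k : ℕ} (h : 0 < digit b n k) : b ^ k ≤ n := by
  by_contra hc
  push_neg at hc
  unfold digit at h
  rw [Nat.div_eq_of_lt hc] at h
  simp at h

/-- Key lemma: if `n` ends in digit `b - 1` and `p` dismally divides `n`, then
every digit of `p` is bounded by the corresponding digit of `n`. -/
lemma divisor_digit_le (hb : 2 ≤ b) {p n : ℕ} (h : DDvd b p n)
    (hmod : n % b = b - 1) (k : ℕ) : digit b p k ≤ digit b n k := by
  obtain ⟨q, hq⟩ := h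
  -- last digit of q is b - 1
  have h0 : digit b n 0 = b - 1 := by rw [digit_zero]; exact hmod
  have hd0 := digit_dmul hb p q 0
  rw [hq, if_pos (by omega)] at hd0
  have hconv0 : dconv b p q 0 = min (digit b p 0) (digit b q 0) := by
    unfold dconv
    simp
  have hq0 : digit b q 0 = b - 1 := by
    have h1 := digit_lt hb p 0
    have h2 := digit_lt hb q 0
    rw [hd0, hconv0] at h0
    omega
  rcases Nat.eq_zero_or_pos (digit b p k) with hz | hpos
  · omega
  · have hk1 : b ^ k ≤ p := pos_digit_imp_pow_le hpos
    have hk2 : k < b ^ k := Nat.lt_pow_self (by omega)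
    have hk3 : k < p + q + 1 := by omega
    have hd := digit_dmul hb p q k
    rw [hq, if_pos hk3] at hd
    rw [hd]
    have hkmem : k ∈ Finset.range (k + 1) := Finset.self_mem_range_succ k
    have hle := Finset.le_sup (f := fun i => min (digit b p i) (digit b q (k - i))) hkmem
    simp only [Nat.sub_self, hq0] at hle
    have hmin : min (digit b p k) (b - 1) = digit b p k := by
      have := digit_lt hb p k
      omega
    rw [hmin] at hle
    unfold dconv
    exact hle

end Aux

/-- `σ_b(n) = n` iff `n ≡ b - 1 (mod b)`; moreover
`n ≤ σ_b(n) ≤ b^(len_b n) - 1`. -/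
theorem dismal_sigma (b : ℕ) (hb : 2 ≤ b) (n : ℕ) (hn : 0 < n) :
    (dsigma b n = n ↔ n % b = b - 1) ∧
    n ≤ dsigma b n ∧ dsigma b n ≤ b ^ dlen b n - 1 := by
  set S := ddivisors b n with hS
  set M := S.sup id + 1 with hM
  set D := fun i => S.sup fun p => digit b p i with hD
  set L := dlen b n with hL
  have hdsig : dsigma b n = ∑ i ∈ Finset.range M, D i * b ^ i := rfl
  have hDlt : ∀ i, D i < b := by
    intro i
    apply (Finset.sup_lt_iff (show (⊥ : ℕ) < b by simp only [bot_eq_zero]; omega)).2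
    intro p _
    exact digit_lt hb p i
  have hnS : n ∈ S := self_mem_ddivisors hb n
  have hb1S : b - 1 ∈ S := base_sub_one_mem_ddivisors hb hn
  have hnM : n < M := by
    have : n ≤ S.sup id := Finset.le_sup (f := id) hnS
    omega
  have hMpow : M < b ^ M := Nat.lt_pow_self (by omega)
  have hnpow : n < b ^ M := by omega
  -- Part 1 : n ≤ dsigma b n
  have hpart1 : n ≤ dsigma b n := by
    conv_lhs => rw [← sum_digits_eq_self hb hnpow]
    rw [hdsig]
    apply Finset.sum_le_sum
    intro i _
    exact Nat.mul_le_mul_right _ (Finset.le_sup (f := fun p => digit b p i) hnS)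
  -- digits of divisors vanish above L
  have hDzero : ∀ i, L ≤ i → D i = 0 := by
    intro i hi
    apply Nat.le_zero.1
    apply Finset.sup_le
    intro p hp
    have hplt : p < b ^ L := (mem_ddivisors.1 hp).1
    have : p < b ^ i := lt_of_lt_of_le hplt (Nat.pow_le_pow_right (by omega) hi)
    rw [digit_eq_zero hb this]
  -- Part 2 : dsigma b n ≤ b ^ L - 1
  have hpart2 : dsigma b n ≤ b ^ L - 1 := by
    apply Nat.le_sub_one_of_lt
    rcases le_or_gt M L with h | h
    · rw [hdsig]
      exact lt_of_lt_of_le (sum_digit_lt hb hDlt M) (Nat.pow_le_pow_right (by omega) h)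
    · have heq : ∑ i ∈ Finset.range M, D i * b ^ i = ∑ i ∈ Finset.range L, D i * b ^ i := by
        symm
        apply Finset.sum_subset (Finset.range_subset_range.2 h.le)
        intro x hx hx'
        rw [Finset.mem_range] at hx'
        rw [hDzero x (by omega)]
        simp
      rw [hdsig, heq]
      exact sum_digit_lt hb hDlt L
  -- digit 0 of dsigma is b - 1
  have hD0 : D 0 = b - 1 := by
    have h1 : b - 1 ≤ D 0 := by
      have := Finset.le_sup (f := fun p => digit b p 0) hb1S
      simpa [digit_base_sub_one_zero hb] using this
    have h2 := hDlt 0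
    omega
  have hsig_mod : dsigma b n % b = b - 1 := by
    have := digit_sum_eq hb hDlt M 0
    rw [if_pos (by omega)] at this
    rw [← digit_zero (dsigma b n), hdsig, this, hD0]
  refine ⟨⟨fun h => ?_, fun h => ?_⟩, hpart1, hpart2⟩
  · rw [← h]
    exact hsig_mod
  · -- backward : dsigma ≤ n
    apply le_antisymm _ hpart1
    have hnd : dsigma b n ≤ ∑ i ∈ Finset.range M, digit b n i * b ^ i := by
      rw [hdsig]
      apply Finset.sum_le_sum
      intro i _
      apply Nat.mul_le_mul_right
      apply Finset.sup_le
      intro p hp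
      exact divisor_digit_le hb (mem_ddivisors.1 hp).2 h i
    rw [sum_digits_eq_self hb hnpow] at hnd
    exact hnd
end

section
/- If n has binary weight w (w ones in its base-2 expansion), then the number of ways to write n as a dismal sum (base 2) of finitely many distinct positive integers equals (1/2)·Σ_{i=0}^{w} (−1)^{w−i} C(w,i) 2^{2^i}, i.e., the number of covers of a labeled w-set by distinct nonempty subsets. -/
open Finset

/-- `p₂ n`: the number of sets of distinct positive integers whose base-2
dismal sum (bitwise OR) equals `n`. -/
noncomputable def p2 (n : ℕ) : ℕ :=
  Nat.card {S : Finset ℕ // S.Nonempty ∧ (∀ m ∈ S, 0 < m) ∧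
    ∀ i, n.testBit i = true ↔ ∃ m ∈ S, m.testBit i = true}

private def bitset (m : ℕ) : Finset ℕ := (Finset.range m).filter (fun i => m.testBit i = true)

private lemma mem_bitset {m i : ℕ} : i ∈ bitset m ↔ m.testBit i = true := by
  simp only [bitset, Finset.mem_filter, Finset.mem_range, and_iff_right_iff_imp]
  intro h
  exact lt_of_lt_of_le (Nat.lt_two_pow_self (n := i)) (Nat.ge_two_pow_of_testBit h)

private instance : Std.Commutative (α := ℕ) (· ||| ·) := ⟨Nat.lor_comm⟩
private instance : Std.Associative (α := ℕ) (· ||| ·) := ⟨Nat.lor_assoc⟩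

private def orSum (s : Finset ℕ) : ℕ := s.fold (· ||| ·) 0 (fun i => 2 ^ i)

private lemma testBit_orSum (s : Finset ℕ) (i : ℕ) :
    (orSum s).testBit i = decide (i ∈ s) := by
  induction s using Finset.induction_on with
  | empty => simp [orSum]
  | @insert a s ha ih =>
    have h1 : orSum (insert a s) = 2 ^ a ||| orSum s := Finset.fold_insert ha
    rw [h1, Nat.testBit_or, ih, Nat.testBit_two_pow]
    simp [Finset.mem_insert, eq_comm]

private lemma bitset_orSum (s : Finset ℕ) : bitset (orSum s) = s := by
  ext i; simp [mem_bitset, testBit_orSum]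

private lemma orSum_bitset (m : ℕ) : orSum (bitset m) = m := by
  apply Nat.eq_of_testBit_eq
  intro i
  rw [testBit_orSum]
  by_cases h : m.testBit i = true
  · simp [h, mem_bitset]
  · simp only [Bool.not_eq_true] at h
    simp [h, mem_bitset]

private lemma bitset_eq_empty {m : ℕ} : bitset m = ∅ ↔ m = 0 := by
  constructor
  · intro h
    by_contra hm
    obtain ⟨i, hi⟩ := Nat.exists_testBit_of_ne_zero hm
    exact absurd (mem_bitset.2 hi) (by simp [h])
  · rintro rfl; ext i; simp [mem_bitset]

private lemma digits_sum_eq (n : ℕ) : (Nat.digits 2 n).sum = (bitset n).card := by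
  induction n using Nat.strong_induction_on with
  | _ n ih =>
    rcases Nat.eq_zero_or_pos n with rfl | hn
    · simp [bitset]
    rw [Nat.digits_def' (by norm_num : 1 < 2) hn, List.sum_cons,
      ih (n / 2) (Nat.div_lt_self hn (by norm_num))]
    have h1 : ((bitset n).filter (fun i => i ≠ 0)).card = (bitset (n / 2)).card := by
      have him : (bitset n).filter (fun i => i ≠ 0) = (bitset (n / 2)).image (· + 1) := by
        ext i
        simp only [Finset.mem_filter, Finset.mem_image, mem_bitset]
        constructor
        · rintro ⟨h, hi⟩
          obtain ⟨j, rfl⟩ := Nat.exists_eq_succ_of_ne_zero hi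
          exact ⟨j, by rwa [← Nat.testBit_succ], rfl⟩
        · rintro ⟨j, hj, rfl⟩
          exact ⟨by rwa [Nat.testBit_succ], by simp⟩
      rw [him, Finset.card_image_of_injective _ (add_left_injective 1)]
    have h2 : ((bitset n).filter (fun i => ¬ i ≠ 0)) = if n % 2 = 1 then {0} else ∅ := by
      ext i
      simp only [Finset.mem_filter, mem_bitset, not_not]
      rcases Nat.mod_two_eq_zero_or_one n with h | h
      · rw [if_neg (by omega)]
        simp only [Finset.notMem_empty, iff_false]
        rintro ⟨hb, rfl⟩
        rw [Nat.testBit_zero] at hb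
        simp [h] at hb
      · rw [if_pos h]
        simp only [Finset.mem_singleton]
        constructor
        · rintro ⟨_, rfl⟩; rfl
        · rintro rfl
          exact ⟨by rw [Nat.testBit_zero]; simp [h], rfl⟩
    have h3 := Finset.card_filter_add_card_filter_not
      (s := bitset n) (p := fun i => i ≠ 0)
    have h4 : ((bitset n).filter (fun i => ¬ i ≠ 0)).card = n % 2 := by
      rw [h2]
      rcases Nat.mod_two_eq_zero_or_one n with h | h <;> simp [h]
    omega

private def covAll (A : Finset ℕ) : Finset (Finset (Finset ℕ)) :=
  A.powerset.powerset.filter (fun C => C.sup id = A)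

private def covers (A : Finset ℕ) : Finset (Finset (Finset ℕ)) :=
  (covAll A).filter (fun C => ¬ ∅ ∈ C)

private lemma mem_covAll {A : Finset ℕ} {C : Finset (Finset ℕ)} :
    C ∈ covAll A ↔ (∀ s ∈ C, s ⊆ A) ∧ C.sup id = A := by
  simp only [covAll, Finset.mem_filter, Finset.mem_powerset, and_congr_left_iff]
  intro _
  constructor
  · intro h s hs; exact Finset.mem_powerset.1 (h hs)
  · intro h s hs; exact Finset.mem_powerset.2 (h s hs)

private lemma mem_covers {A : Finset ℕ} {C : Finset (Finset ℕ)} :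
    C ∈ covers A ↔ (∀ s ∈ C, s ⊆ A) ∧ C.sup id = A ∧ ¬ ∅ ∈ C := by
  rw [covers, Finset.mem_filter, mem_covAll, and_assoc]

private lemma covAll_card (A : Finset ℕ) : (covAll A).card = 2 * (covers A).card := by
  have hsplit := Finset.card_filter_add_card_filter_not
    (s := covAll A) (p := fun C => ∅ ∈ C)
  have hbij : ((covAll A).filter (fun C => ∅ ∈ C)).card = (covers A).card := by
    refine Finset.card_bij' (fun C _ => C.erase ∅) (fun C _ => insert ∅ C) ?_ ?_ ?_ ?_
    · intro C hC
      simp only [Finset.mem_filter, mem_covAll] at hC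
      obtain ⟨⟨hsub, hsup⟩, hmem⟩ := hC
      rw [mem_covers]
      refine ⟨fun s hs => hsub s (Finset.mem_of_mem_erase hs), ?_, by simp⟩
      have h0 : (insert ∅ (C.erase ∅)).sup id = A := by
        rw [Finset.insert_erase hmem, hsup]
      simpa using h0
    · intro C hC
      rw [mem_covers] at hC
      obtain ⟨hsub, hsup, hmem⟩ := hC
      simp only [Finset.mem_filter, mem_covAll]
      refine ⟨⟨?_, ?_⟩, by simp⟩
      · intro s hs
        rcases Finset.mem_insert.1 hs with rfl | hs
        · exact Finset.empty_subset A
        · exact hsub s hs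
      · rw [Finset.sup_insert, ← hsup]
        simp
    · intro C hC
      simp only [Finset.mem_filter] at hC
      exact Finset.insert_erase hC.2
    · intro C hC
      rw [mem_covers] at hC
      exact Finset.erase_insert hC.2.2
  have hcov : ((covAll A).filter (fun a => ∅ ∉ a)).card = (covers A).card := rfl
  omega

private lemma sum_covAll (T : Finset ℕ) :
    2 ^ (2 ^ T.card) = ∑ U ∈ T.powerset, (covAll U).card := by
  have hmaps : ∀ C ∈ T.powerset.powerset, C.sup id ∈ T.powerset := by
    intro C hC
    rw [Finset.mem_powerset] at hC
    rw [Finset.mem_powerset]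
    intro x hx
    rw [Finset.mem_sup] at hx
    obtain ⟨v, hv, hxv⟩ := hx
    exact Finset.mem_powerset.1 (hC hv) hxv
  have h := Finset.card_eq_sum_card_fiberwise hmaps
  rw [Finset.card_powerset, Finset.card_powerset] at h
  rw [h]
  refine Finset.sum_congr rfl fun U hU => ?_
  congr 1
  ext C
  simp only [Finset.mem_filter, Finset.mem_powerset, mem_covAll]
  constructor
  · rintro ⟨hC, rfl⟩
    exact ⟨fun s hs x hx => Finset.mem_sup.2 ⟨s, hs, hx⟩, rfl⟩
  · rintro ⟨hC, rfl⟩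
    refine ⟨fun s hs => Finset.mem_powerset.2 fun x hx => ?_, rfl⟩
    exact Finset.mem_powerset.1 hU (Finset.mem_sup.2 ⟨s, hs, hx⟩)

private lemma neg_one_pow_sub {k j : ℕ} (h : j ≤ k) :
    (-1 : ℤ) ^ (k - j) = (-1) ^ k * (-1) ^ j := by
  rw [← pow_add, show k + j = (k - j) + 2 * j by omega, pow_add, pow_mul]
  norm_num

private lemma mobInnerSum (A U : Finset ℕ) (hU : U ⊆ A) :
    ∑ T ∈ A.powerset.filter (fun T => U ⊆ T), (-1 : ℤ) ^ (A.card - T.card)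
      = if U = A then 1 else 0 := by
  have hbij : ∑ T ∈ A.powerset.filter (fun T => U ⊆ T), (-1 : ℤ) ^ (A.card - T.card)
      = ∑ V ∈ (A \ U).powerset, (-1 : ℤ) ^ ((A \ U).card - V.card) := by
    refine Finset.sum_nbij' (fun T => T \ U) (fun V => U ∪ V) ?_ ?_ ?_ ?_ ?_
    · intro T hT
      simp only [Finset.mem_filter, Finset.mem_powerset] at hT
      exact Finset.mem_powerset.2 (Finset.sdiff_subset_sdiff hT.1 Finset.Subset.rfl)
    · intro V hV
      rw [Finset.mem_powerset] at hV
      simp only [Finset.mem_filter, Finset.mem_powerset]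
      exact ⟨Finset.union_subset hU (hV.trans Finset.sdiff_subset), Finset.subset_union_left⟩
    · intro T hT
      simp only [Finset.mem_filter] at hT
      exact Finset.union_sdiff_of_subset hT.2
    · intro V hV
      rw [Finset.mem_powerset] at hV
      exact Finset.union_sdiff_cancel_left (Finset.disjoint_left.2
        fun x hxU hxV => (Finset.mem_sdiff.1 (hV hxV)).2 hxU)
    · intro T hT
      simp only [Finset.mem_filter, Finset.mem_powerset] at hT
      show (-1 : ℤ) ^ (A.card - T.card) = (-1) ^ ((A \ U).card - (T \ U).card)
      congr 1
      have h1 : (T \ U).card = T.card - U.card := Finset.card_sdiff_of_subset hT.2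
      have h2 : (A \ U).card = A.card - U.card := Finset.card_sdiff_of_subset hU
      have h3 : U.card ≤ T.card := Finset.card_le_card hT.2
      have h4 : T.card ≤ A.card := Finset.card_le_card hT.1
      omega
  rw [hbij]
  have hle : ∀ V ∈ (A \ U).powerset, (-1 : ℤ) ^ ((A \ U).card - V.card)
      = (-1) ^ (A \ U).card * (-1) ^ V.card := fun V hV =>
    neg_one_pow_sub (Finset.card_le_card (Finset.mem_powerset.1 hV))
  rw [Finset.sum_congr rfl hle, ← Finset.mul_sum, Finset.sum_powerset_neg_one_pow_card]
  by_cases h : U = A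
  · subst h
    simp
  · have : ¬ (A \ U = ∅) := by
      rw [Finset.sdiff_eq_empty_iff_subset]
      intro hAU
      exact h (Finset.Subset.antisymm hU hAU)
    rw [if_neg this, if_neg h, mul_zero]

private lemma covAll_eq (A : Finset ℕ) :
    ∑ T ∈ A.powerset, (-1 : ℤ) ^ (A.card - T.card) * 2 ^ (2 ^ T.card)
      = ((covAll A).card : ℤ) := by
  have hTpow : ∀ T ∈ A.powerset, T.powerset = A.powerset.filter (fun U => U ⊆ T) := by
    intro T hT
    rw [Finset.mem_powerset] at hT
    ext U
    simp only [Finset.mem_powerset, Finset.mem_filter]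
    exact ⟨fun h => ⟨h.trans hT, h⟩, fun h => h.2⟩
  calc ∑ T ∈ A.powerset, (-1 : ℤ) ^ (A.card - T.card) * 2 ^ (2 ^ T.card)
      = ∑ T ∈ A.powerset, ∑ U ∈ A.powerset,
          (if U ⊆ T then (-1 : ℤ) ^ (A.card - T.card) * ((covAll U).card : ℤ) else 0) := by
        refine Finset.sum_congr rfl fun T hT => ?_
        have h2 : ((2 : ℤ) ^ (2 ^ T.card)) = ∑ U ∈ T.powerset, ((covAll U).card : ℤ) := by
          exact_mod_cast sum_covAll T
        rw [h2, Finset.mul_sum, hTpow T hT, Finset.sum_filter]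
    _ = ∑ U ∈ A.powerset, (∑ T ∈ A.powerset.filter (fun T => U ⊆ T),
          (-1 : ℤ) ^ (A.card - T.card)) * ((covAll U).card : ℤ) := by
        rw [Finset.sum_comm]
        refine Finset.sum_congr rfl fun U hU => ?_
        rw [Finset.sum_filter, Finset.sum_mul]
        refine Finset.sum_congr rfl fun T hT => ?_
        rw [ite_mul, zero_mul]
    _ = ((covAll A).card : ℤ) := by
        rw [Finset.sum_congr rfl (fun U hU =>
          by rw [mobInnerSum A U (Finset.mem_powerset.1 hU)])]
        simp [Finset.sum_ite_eq', Finset.mem_powerset]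

private lemma p2_eq (n : ℕ) (hn : 0 < n) : p2 n = (covers (bitset n)).card := by
  have e : {S : Finset ℕ // S.Nonempty ∧ (∀ m ∈ S, 0 < m) ∧
      ∀ i, n.testBit i = true ↔ ∃ m ∈ S, m.testBit i = true}
      ≃ {C // C ∈ covers (bitset n)} :=
    { toFun := fun S => ⟨S.1.image bitset, by
        obtain ⟨S, hne, hpos, hbits⟩ := S
        rw [mem_covers]
        refine ⟨?_, ?_, ?_⟩
        · intro s hs
          obtain ⟨m, hm, rfl⟩ := Finset.mem_image.1 hs
          intro i hi
          exact mem_bitset.2 ((hbits i).2 ⟨m, hm, mem_bitset.1 hi⟩)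
        · ext i
          rw [Finset.mem_sup]
          constructor
          · rintro ⟨s, hs, hi⟩
            obtain ⟨m, hm, rfl⟩ := Finset.mem_image.1 hs
            exact mem_bitset.2 ((hbits i).2 ⟨m, hm, mem_bitset.1 hi⟩)
          · intro hi
            obtain ⟨m, hm, hmi⟩ := (hbits i).1 (mem_bitset.1 hi)
            exact ⟨bitset m, Finset.mem_image_of_mem _ hm, mem_bitset.2 hmi⟩
        · intro hmem
          obtain ⟨m, hm, hem⟩ := Finset.mem_image.1 hmem
          have h1 := bitset_eq_empty.1 hem
          have h2 := hpos m hm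
          omega⟩,
      invFun := fun C => ⟨C.1.image orSum, by
        obtain ⟨C, hC⟩ := C
        rw [mem_covers] at hC
        obtain ⟨hsub, hsup, hne⟩ := hC
        refine ⟨?_, ?_, ?_⟩
        · rw [Finset.image_nonempty, Finset.nonempty_iff_ne_empty]
          rintro rfl
          rw [Finset.sup_empty] at hsup
          exact absurd (bitset_eq_empty.1 hsup.symm) (by omega)
        · intro m hm
          obtain ⟨s, hs, rfl⟩ := Finset.mem_image.1 hm
          rcases Nat.eq_zero_or_pos (orSum s) with h0 | h0
          · exfalso
            have : bitset (orSum s) = ∅ := by rw [h0]; exact bitset_eq_empty.2 rfl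
            rw [bitset_orSum] at this
            exact hne (this ▸ hs)
          · exact h0
        · intro i
          constructor
          · intro hi
            have : i ∈ C.sup id := hsup.symm ▸ mem_bitset.2 hi
            rw [Finset.mem_sup] at this
            obtain ⟨s, hs, his⟩ := this
            refine ⟨orSum s, Finset.mem_image_of_mem _ hs, ?_⟩
            rw [testBit_orSum]
            simpa using his
          · rintro ⟨m, hm, hmi⟩
            obtain ⟨s, hs, rfl⟩ := Finset.mem_image.1 hm
            rw [testBit_orSum] at hmi
            have his : i ∈ s := by simpa using hmi
            have : i ∈ C.sup id := Finset.mem_sup.2 ⟨s, hs, his⟩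
            rw [hsup] at this
            exact mem_bitset.1 this⟩,
      left_inv := fun S => by
        apply Subtype.ext
        show (S.1.image bitset).image orSum = S.1
        rw [Finset.image_image]
        calc S.1.image (fun m => orSum (bitset m)) = S.1.image id :=
              Finset.image_congr (fun m _ => orSum_bitset m)
          _ = S.1 := Finset.image_id
      right_inv := fun C => by
        apply Subtype.ext
        show (C.1.image orSum).image bitset = C.1
        rw [Finset.image_image]
        calc C.1.image (fun s => bitset (orSum s)) = C.1.image id :=
              Finset.image_congr (fun s _ => bitset_orSum s)
          _ = C.1 := Finset.image_id }
  rw [p2, Nat.card_congr e, Nat.card_eq_finsetCard]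

/-- if `n` has binary weight `w`, the number of dismal partitions
of `n` into distinct parts is `(1/2)·Σ_{i=0}^{w} (−1)^{w−i} C(w,i) 2^{2^i}`. -/
theorem dismal_partitions_base2 (n : ℕ) (hn : 0 < n) :
    (2 * p2 n : ℤ) =
      ∑ i ∈ Finset.range ((Nat.digits 2 n).sum + 1),
        (-1 : ℤ) ^ ((Nat.digits 2 n).sum - i) *
          (Nat.choose (Nat.digits 2 n).sum i) * 2 ^ (2 ^ i) := by
  rw [digits_sum_eq]
  set A := bitset n with hA
  have h1 : (2 * p2 n : ℤ) = ((covAll A).card : ℤ) := by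
    rw [p2_eq n hn, covAll_card]
    push_cast
    ring
  rw [h1, ← covAll_eq]
  rw [Finset.sum_powerset_apply_card (f := fun m => (-1 : ℤ) ^ (A.card - m) * 2 ^ (2 ^ m))]
  refine Finset.sum_congr rfl fun i _ => ?_
  rw [nsmul_eq_mul]
  ring
end
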